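/- arXiv:0812.0560 — 8 statements merged into one kernel-verified Lean document; each statement's English description precedes it below -/
import Mathlib

section
/- Let G be a group with symmetric generating set A containing the identity, and suppose that for every x ∈ G there exists a ∈ A with ℓ_A(ax) = 1 + ℓ_A(x). Then for every nonnegative integer h, the set C = ⋃_{q≥0} S_e((2h+1)q) is an h-net in (G, d_A), i.e., G = AʰC. -/
open Pointwise

noncomputable def wordLen {G : Type*} [Group G] (A : Set G) (x : G) : ℕ :=
  sInf {r | ∃ l : List G, (∀ a ∈ l, a ∈ A) ∧ l.prod = x ∧ l.length = r}

lemma wordLen_exists {G : Type*} [Group G] (A : Set G)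
    (hsym : ∀ a ∈ A, a⁻¹ ∈ A) (hgen : Subgroup.closure A = ⊤) (x : G) :
    ∃ l : List G, (∀ a ∈ l, a ∈ A) ∧ l.prod = x ∧ l.length = wordLen A x := by
  have hAinv : A⁻¹ ⊆ A := fun a ha => by
    have := hsym a⁻¹ ha; simpa using this
  have hx : x ∈ Submonoid.closure (A ∪ A⁻¹) := by
    have : x ∈ (Subgroup.closure A).toSubmonoid := by
      rw [hgen]; trivial
    rwa [Subgroup.closure_toSubmonoid] at this
  obtain ⟨l, hl, hlp⟩ := Submonoid.exists_list_of_mem_closure hx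
  have hl' : ∀ a ∈ l, a ∈ A := fun a ha => by
    rcases hl a ha with h | h
    · exact h
    · exact hAinv h
  have hne : {r | ∃ l : List G, (∀ a ∈ l, a ∈ A) ∧ l.prod = x ∧ l.length = r}.Nonempty :=
    ⟨l.length, l, hl', hlp, rfl⟩
  exact Nat.sInf_mem hne

lemma wordLen_le {G : Type*} [Group G] (A : Set G) {x : G} {l : List G}
    (hl : ∀ a ∈ l, a ∈ A) (hp : l.prod = x) : wordLen A x ≤ l.length :=
  Nat.sInf_le ⟨l, hl, hp, rfl⟩

lemma list_prod_mem_pow {G : Type*} [Group G] (A : Set G) :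
    ∀ (l : List G), (∀ a ∈ l, a ∈ A) → l.prod ∈ A ^ l.length := by
  intro l
  induction l with
  | nil => intro _; simp
  | cons a t ih =>
    intro hl
    rw [List.prod_cons, List.length_cons, pow_succ']
    exact Set.mul_mem_mul (hl a List.mem_cons_self)
      (ih fun b hb => hl b (List.mem_cons_of_mem a hb))

lemma mem_pow_inv {G : Type*} [Group G] {A : Set G}
    (hsym : ∀ a ∈ A, a⁻¹ ∈ A) : ∀ (m : ℕ) (p : G), p ∈ A ^ m → p⁻¹ ∈ A ^ m := by
  intro m
  induction m with
  | zero => intro p hp; simp at hp; simp [hp]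
  | succ m ih =>
    intro p hp
    rw [pow_succ'] at hp
    obtain ⟨a, ha, q, hq, rfl⟩ := hp
    rw [mul_inv_rev, pow_succ]
    exact Set.mul_mem_mul (ih q hq) (hsym a ha)

lemma extend_len {G : Type*} [Group G] {A : Set G}
    (hsub : ∀ x : G, ∃ a ∈ A, wordLen A (a * x) = 1 + wordLen A x) :
    ∀ (m : ℕ) (x : G), ∃ p ∈ A ^ m, wordLen A (p * x) = m + wordLen A x := by
  intro m
  induction m with
  | zero => intro x; exact ⟨1, by simp, by simp⟩
  | succ m ih =>
    intro x
    obtain ⟨p, hp, hlen⟩ := ih x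
    obtain ⟨a, ha, halen⟩ := hsub (p * x)
    refine ⟨a * p, ?_, ?_⟩
    · rw [pow_succ']; exact Set.mul_mem_mul ha hp
    · rw [mul_assoc, halen, hlen]; ring

theorem stmt3 {G : Type*} [Group G] (A : Set G)
    (hsym : ∀ a ∈ A, a⁻¹ ∈ A) (hgen : Subgroup.closure A = ⊤)
    (hid : (1 : G) ∈ A)
    (hsub : ∀ x : G, ∃ a ∈ A, wordLen A (a * x) = 1 + wordLen A x) (h : ℕ) :
    A ^ h * (⋃ q : ℕ, {x : G | wordLen A x = (2 * h + 1) * q}) = Set.univ := by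
  ext x
  simp only [Set.mem_univ, iff_true]
  set n := wordLen A x with hn
  set r := n % (2 * h + 1) with hr
  set q0 := n / (2 * h + 1) with hq0
  have hdm : (2 * h + 1) * q0 + r = n := Nat.div_add_mod n (2 * h + 1)
  have hrlt : r < 2 * h + 1 := Nat.mod_lt n (by omega)
  by_cases hcase : r ≤ h
  · -- split the word
    obtain ⟨l, hl, hlp, hll⟩ := wordLen_exists A hsym hgen x
    set p := (l.take r).prod with hp
    set c := (l.drop r).prod with hc
    have hpc : p * c = x := by rw [hp, hc, ← List.prod_append, List.take_append_drop, hlp]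
    have hlt : ∀ a ∈ l.take r, a ∈ A := fun a ha => hl a (List.mem_of_mem_take ha)
    have hld : ∀ a ∈ l.drop r, a ∈ A := fun a ha => hl a (List.mem_of_mem_drop ha)
    have hrn : r ≤ n := Nat.mod_le n _
    have hltlen : (l.take r).length = r := by
      rw [List.length_take]; omega
    have hdlen : (l.drop r).length = n - r := by
      rw [List.length_drop]; omega
    have hcle : wordLen A c ≤ (2 * h + 1) * q0 := by
      have := wordLen_le A hld hc.symm
      omega
    have hcge : (2 * h + 1) * q0 ≤ wordLen A c := by
      obtain ⟨lc, hlc, hlcp, hlcl⟩ := wordLen_exists A hsym hgen c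
      have hx : wordLen A x ≤ (l.take r ++ lc).length := by
        apply wordLen_le A
        · intro a ha
          rcases List.mem_append.1 ha with ha | ha
          · exact hlt a ha
          · exact hlc a ha
        · rw [List.prod_append, hlcp, hpc]
      rw [List.length_append, hltlen, hlcl] at hx
      omega
    have hceq : wordLen A c = (2 * h + 1) * q0 := le_antisymm hcle hcge
    have hpmem : p ∈ A ^ h := by
      have := list_prod_mem_pow A (l.take r) hlt
      rw [hltlen] at this
      exact Set.pow_subset_pow_right hid hcase this
    exact ⟨p, hpmem, c, Set.mem_iUnion.2 ⟨q0, hceq⟩, hpc⟩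
  · -- extend the word
    set m := 2 * h + 1 - r with hm
    have hmh : m ≤ h := by omega
    obtain ⟨p, hp, hlen⟩ := extend_len hsub m x
    have hpi : p⁻¹ ∈ A ^ h :=
      Set.pow_subset_pow_right hid hmh (mem_pow_inv hsym m p hp)
    have hceq : wordLen A (p * x) = (2 * h + 1) * (q0 + 1) := by
      rw [hlen, Nat.mul_succ]; omega
    exact ⟨p⁻¹, hpi, p * x, Set.mem_iUnion.2 ⟨q0 + 1, hceq⟩, by group⟩
end

section
/- Let g be an even integer with g ≥ 2. Every integer n has a representation n = Σ_{i≥0} εᵢ gⁱ where each εᵢ ∈ {0, ±1, ..., ±g/2}, only finitely many εᵢ are nonzero, and whenever |εᵢ| = g/2 one has |ε_{i+1}| < g/2 and εᵢε_{i+1} ≥ 0. -/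
private def dig (g n : ℤ) : ℤ :=
  if n % g < g / 2 then n % g
  else if g / 2 < n % g then n % g - g
  else if ((n - g / 2) / g) % g < g / 2 then g / 2 else -(g / 2)

private def nxt (g n : ℤ) : ℤ := (n - dig g n) / g

private lemma two_h {g : ℤ} (hg : 2 ≤ g) (hge : Even g) : g = 2 * (g / 2) := by
  rw [Int.even_iff] at hge; omega

private lemma emod_char {g a r : ℤ} (hg : 0 < g) (h0 : 0 ≤ r) (h1 : r < g)
    (hd : g ∣ a - r) : a % g = r := by
  obtain ⟨c, hc⟩ := hd
  have ha : a = r + g * c := by linarith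
  rw [ha, Int.add_mul_emod_self_left, Int.emod_eq_of_lt h0 h1]

private lemma abs_dig_le (g n : ℤ) (hg : 2 ≤ g) : |dig g n| ≤ g / 2 := by
  have h0 : 0 ≤ n % g := Int.emod_nonneg n (by omega)
  have h1 : n % g < g := Int.emod_lt_of_pos n (by omega)
  unfold dig
  split_ifs with h2 h3 h4 <;> rw [abs_le] <;>
    [skip; skip; omega; omega] <;> omega

private lemma sub_dig_dvd (g n : ℤ) (hg : 2 ≤ g) (hge : Even g) : g ∣ n - dig g n := by
  have hd : n - n % g = g * (n / g) := by rw [Int.emod_def]; ring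
  have h2 := two_h hg hge
  unfold dig
  split_ifs with b1 b2 b3
  · exact ⟨n / g, hd⟩
  · exact ⟨n / g + 1, by linarith [hd]⟩
  · have hr : n % g = g / 2 := by omega
    exact ⟨n / g, by rw [← hr]; exact hd⟩
  · have hr : n % g = g / 2 := by omega
    exact ⟨n / g + 1, by rw [mul_add, ← hd, hr]; ring_nf; omega⟩

private lemma nxt_spec (g n : ℤ) (hg : 2 ≤ g) (hge : Even g) :
    n = dig g n + g * nxt g n := by
  obtain ⟨c, hc⟩ := sub_dig_dvd g n hg hge
  unfold nxt
  rw [hc, Int.mul_ediv_cancel_left _ (by omega : g ≠ 0)]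
  linarith

private lemma dig_zero (g : ℤ) (hg : 2 ≤ g) : dig g 0 = 0 := by
  unfold dig
  rw [Int.zero_emod, if_pos (by omega)]

private lemma nxt_zero (g : ℤ) (hg : 2 ≤ g) : nxt g 0 = 0 := by
  unfold nxt
  rw [dig_zero g hg]; simp

private lemma abs_nxt_lt (g n : ℤ) (hg : 2 ≤ g) (hge : Even g) (hn : n ≠ 0) :
    |nxt g n| < |n| := by
  have h2 := two_h hg hge
  have hd := abs_dig_le g n hg
  have hs := nxt_spec g n hg hge
  rcases le_or_gt 2 |n| with hb | hb
  · by_contra hcon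
    push_neg at hcon
    have h1 : g * |nxt g n| = |n - dig g n| := by
      rw [show n - dig g n = g * nxt g n by linarith, abs_mul,
        abs_of_pos (show (0:ℤ) < g by omega)]
    have h3 : |n - dig g n| ≤ |n| + g / 2 := by
      calc |n - dig g n| ≤ |n| + |dig g n| := abs_sub _ _
        _ ≤ |n| + g / 2 := by linarith
    nlinarith [abs_nonneg (nxt g n), abs_nonneg n]
  · -- |n| = 1
    have hn1 : n = 1 ∨ n = -1 := by
      rcases abs_cases n with ⟨h', _⟩ | ⟨h', _⟩ <;> omega
    have hzero : nxt g n = 0 := by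
      rcases hn1 with rfl | rfl
      · rcases lt_or_ge 1 (g / 2) with hgl | hgl
        · have hm : (1 : ℤ) % g = 1 := Int.emod_eq_of_lt (by omega) (by omega)
          unfold nxt dig
          rw [hm, if_pos hgl]; simp
        · have hg2 : g = 2 := by omega
          subst hg2; decide
      · rcases lt_or_ge (g / 2) (g - 1) with hgl | hgl
        · have hm : (-1 : ℤ) % g = g - 1 :=
            emod_char (by omega) (by omega) (by omega) ⟨-1, by ring⟩
          unfold nxt dig
          rw [hm, if_neg (by omega), if_pos (by omega)]
          simp
        · have hg2 : g = 2 := by omega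
          subst hg2; decide
    rw [hzero]
    simpa using hn

private lemma dig_key (g n : ℤ) (hg : 2 ≤ g) (hge : Even g) (h : |dig g n| = g / 2) :
    |dig g (nxt g n)| < g / 2 ∧ 0 ≤ dig g n * dig g (nxt g n) := by
  have h2 := two_h hg hge
  have h0 : 0 ≤ n % g := Int.emod_nonneg n (by omega)
  have h1 : n % g < g := Int.emod_lt_of_pos n (by omega)
  -- step 1: n % g = g / 2
  have hr : n % g = g / 2 := by
    rcases lt_trichotomy (n % g) (g / 2) with hb | hb | hb
    · exfalso
      unfold dig at h
      rw [if_pos hb] at h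
      rcases abs_cases (n % g) with ⟨h', _⟩ | ⟨h', _⟩ <;> omega
    · exact hb
    · exfalso
      unfold dig at h
      rw [if_neg (by omega), if_pos hb] at h
      rcases abs_cases (n % g - g) with ⟨h', _⟩ | ⟨h', _⟩ <;> omega
  set q := n / g with hqdef
  have hq : n - g / 2 = g * q := by
    have hh := Int.emod_def n g
    rw [hr, ← hqdef] at hh
    linarith
  have hqq : (n - g / 2) / g = q := by
    rw [hq, Int.mul_ediv_cancel_left _ (by omega : g ≠ 0)]
  have hq0 : 0 ≤ q % g := Int.emod_nonneg q (by omega)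
  have hq1 : q % g < g := Int.emod_lt_of_pos q (by omega)
  rcases lt_or_ge (q % g) (g / 2) with hc | hc
  · -- dig g n = g / 2
    have hdig : dig g n = g / 2 := by
      unfold dig
      rw [if_neg (by omega), if_neg (by omega), hqq, if_pos hc]
    have hnxt : nxt g n = q := by
      unfold nxt
      rw [hdig, hqq]
    have hdig2 : dig g (nxt g n) = q % g := by
      rw [hnxt]
      unfold dig
      rw [if_pos hc]
    rw [hdig, hdig2]
    constructor
    · rwa [abs_of_nonneg hq0]
    · positivity
  · -- dig g n = -(g / 2)
    have hdig : dig g n = -(g / 2) := by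
      unfold dig
      rw [if_neg (by omega), if_neg (by omega), hqq, if_neg (by omega)]
    have hnxt : nxt g n = q + 1 := by
      unfold nxt
      rw [hdig]
      have : n - -(g / 2) = g * (q + 1) := by linarith
      rw [this, Int.mul_ediv_cancel_left _ (by omega : g ≠ 0)]
    have hqd : q - q % g = g * (q / g) := by rw [Int.emod_def]; ring
    rcases lt_or_ge (q % g + 1) g with hlt | hlt
    · have hm : (q + 1) % g = q % g + 1 :=
        emod_char (by omega) (by omega) hlt ⟨q / g, by linarith⟩
      have hdig2 : dig g (q + 1) = q % g + 1 - g := by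
        unfold dig
        rw [hm, if_neg (by omega), if_pos (by omega)]
      rw [hdig, hnxt, hdig2]
      constructor
      · rcases abs_cases (q % g + 1 - g) with ⟨h', _⟩ | ⟨h', _⟩ <;> omega
      · nlinarith
    · -- q % g = g - 1
      have hm : (q + 1) % g = 0 :=
        emod_char (by omega) le_rfl (by omega) ⟨q / g + 1, by linarith⟩
      have hdig2 : dig g (q + 1) = 0 := by
        unfold dig
        rw [hm, if_pos (by omega)]
      rw [hdig, hnxt, hdig2]
      constructor
      · simpa using (by omega : 0 < g / 2)
      · simp

private lemma iter_zero (g : ℤ) (hg : 2 ≤ g) : ∀ k : ℕ, (nxt g)^[k] 0 = 0 := by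
  intro k
  induction k with
  | zero => simp
  | succ k ih => rw [Function.iterate_succ_apply', ih, nxt_zero g hg]

private lemma iter_eq_zero (g : ℤ) (hg : 2 ≤ g) (hge : Even g) :
    ∀ (k : ℕ) (m : ℤ), |m| ≤ k → (nxt g)^[k] m = 0 := by
  intro k
  induction k with
  | zero =>
    intro m hm
    simp only [Function.iterate_zero, id_eq]
    simpa using le_antisymm (by exact_mod_cast hm) (abs_nonneg m) |>.symm ▸
      (abs_eq_zero.mp (le_antisymm (by exact_mod_cast hm) (abs_nonneg m)))
  | succ k ih =>
    intro m hm
    by_cases h0 : m = 0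
    · subst h0; exact iter_zero g hg _
    · rw [Function.iterate_succ_apply]
      apply ih
      have := abs_nxt_lt g m hg hge h0
      push_cast at hm ⊢
      omega

private lemma sum_eq (g n : ℤ) (hg : 2 ≤ g) (hge : Even g) :
    ∀ k : ℕ, n = (∑ i ∈ Finset.range k, dig g ((nxt g)^[i] n) * g ^ i)
      + (nxt g)^[k] n * g ^ k := by
  intro k
  induction k with
  | zero => simp
  | succ k ih =>
    rw [Finset.sum_range_succ, Function.iterate_succ_apply', pow_succ]
    have hs := nxt_spec g ((nxt g)^[k] n) hg hge
    linear_combination ih + g ^ k * hs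

theorem stmt5 (g : ℤ) (hg : 2 ≤ g) (hge : Even g) (n : ℤ) :
    ∃ ε : ℕ → ℤ,
      (∀ i, |ε i| ≤ g / 2) ∧
      (Set.Finite {i | ε i ≠ 0}) ∧
      (∀ i, |ε i| = g / 2 → |ε (i + 1)| < g / 2 ∧ 0 ≤ ε i * ε (i + 1)) ∧
      n = ∑ᶠ i, ε i * g ^ i := by
  set K := n.natAbs with hK
  set ε : ℕ → ℤ := fun i => dig g ((nxt g)^[i] n) with hε
  have hKzero : ∀ i, K ≤ i → ε i = 0 := by
    intro i hi
    have h1 : (nxt g)^[K] n = 0 :=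
      iter_eq_zero g hg hge K n (by rw [hK]; exact_mod_cast (Int.abs_eq_natAbs n).le)
    have h2 : (nxt g)^[i] n = 0 := by
      obtain ⟨j, rfl⟩ := Nat.exists_eq_add_of_le hi
      rw [Nat.add_comm, Function.iterate_add_apply, h1, iter_zero g hg]
    simp only [hε, h2, dig_zero g hg]
  refine ⟨ε, fun i => abs_dig_le g _ hg, ?_, ?_, ?_⟩
  · apply Set.Finite.subset (Finset.range K).finite_toSet
    intro i hi
    simp only [Set.mem_setOf_eq] at hi
    simp only [Finset.coe_range, Set.mem_Iio]
    by_contra hcon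
    exact hi (hKzero i (by omega))
  · intro i h
    have := dig_key g ((nxt g)^[i] n) hg hge h
    simpa [hε, Function.iterate_succ_apply'] using this
  · have hsupp : (Function.support fun i => ε i * g ^ i) ⊆ ↑(Finset.range K) := by
      intro i hi
      simp only [Function.mem_support] at hi
      simp only [Finset.coe_range, Set.mem_Iio]
      by_contra hcon
      exact hi (by rw [hKzero i (by omega), zero_mul])
    rw [finsum_eq_sum_of_support_subset _ hsupp]
    have := sum_eq g n hg hge K
    have h1 : (nxt g)^[K] n = 0 :=
      iter_eq_zero g hg hge K n (by rw [hK]; exact_mod_cast (Int.abs_eq_natAbs n).le)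
    rw [h1] at this
    simpa using this
end

section
/- Let g be an even integer with g ≥ 2. The representation n = Σ_{i≥0} εᵢ gⁱ satisfying: εᵢ ∈ {0, ±1, ..., ±g/2}, finitely many nonzero εᵢ, and (|εᵢ| = g/2 implies |ε_{i+1}| < g/2 and εᵢε_{i+1} ≥ 0), is unique for every integer n. -/
lemma split1 (g : ℤ) (ε : ℕ → ℤ) (K : ℕ) :
    ∑ i ∈ Finset.range (K+1), ε i * g ^ i
      = ε 0 + g * ∑ i ∈ Finset.range K, ε (i+1) * g ^ i := by
  rw [Finset.sum_range_succ' (fun i => ε i * g ^ i) K]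
  have hsum : ∑ i ∈ Finset.range K, ε (i+1) * g ^ (i+1)
      = g * ∑ i ∈ Finset.range K, ε (i+1) * g ^ i := by
    rw [Finset.mul_sum]
    exact Finset.sum_congr rfl fun i _ => by ring
  rw [hsum]
  ring

lemma split2 (g : ℤ) (ε : ℕ → ℤ) (K : ℕ) :
    ∃ t : ℤ, ∑ i ∈ Finset.range (K+2), ε i * g ^ i
      = ε 0 + ε 1 * g + g ^ 2 * t := by
  refine ⟨∑ i ∈ Finset.range K, ε (i+2) * g ^ i, ?_⟩
  rw [split1, split1]
  have hsum : ∑ i ∈ Finset.range K, ε (i+1+1) * g ^ i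
      = ∑ i ∈ Finset.range K, ε (i+2) * g ^ i :=
    Finset.sum_congr rfl fun i _ => rfl
  rw [hsum]
  norm_num
  ring

lemma aux (g : ℤ) (hg : 2 ≤ g) (hge : Even g) :
    ∀ N : ℕ, ∀ ε ε' : ℕ → ℤ,
    (∀ i, |ε i| ≤ g / 2) → (∀ i, |ε' i| ≤ g / 2) →
    (∀ i, |ε i| = g / 2 → |ε (i + 1)| < g / 2 ∧ 0 ≤ ε i * ε (i + 1)) →
    (∀ i, |ε' i| = g / 2 → |ε' (i + 1)| < g / 2 ∧ 0 ≤ ε' i * ε' (i + 1)) →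
    (∀ i, N ≤ i → ε i = 0) → (∀ i, N ≤ i → ε' i = 0) →
    (∑ i ∈ Finset.range N, ε i * g ^ i) = (∑ i ∈ Finset.range N, ε' i * g ^ i) →
    ε = ε' := by
  obtain ⟨r, hr⟩ := hge
  have hr2 : g / 2 = r := by omega
  have hrpos : 1 ≤ r := by omega
  have hg0 : g ≠ 0 := by omega
  intro N
  induction N with
  | zero =>
    intro ε ε' _ _ _ _ hz hz' _
    funext i
    rw [hz i (Nat.zero_le i), hz' i (Nat.zero_le i)]
  | succ N ih =>
    intro ε ε' h1 h1' h3 h3' hz hz' hsum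
    have ext : ∀ (f : ℕ → ℤ), (∀ i, N + 1 ≤ i → f i = 0) →
        ∑ i ∈ Finset.range (N+3), f i * g ^ i = ∑ i ∈ Finset.range (N+1), f i * g ^ i := by
      intro f hf
      rw [Finset.sum_range_succ, Finset.sum_range_succ, hf (N+1) (by omega),
        hf (N+2) (by omega)]
      ring
    obtain ⟨t, ht⟩ := split2 g ε (N+1)
    obtain ⟨t', ht'⟩ := split2 g ε' (N+1)
    rw [ext ε hz] at ht
    rw [ext ε' hz'] at ht'
    have key : ε 0 + ε 1 * g + g ^ 2 * t = ε' 0 + ε' 1 * g + g ^ 2 * t' := by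
      rw [← ht, ← ht', hsum]
    have hb0 := abs_le.mp (h1 0); have hb0' := abs_le.mp (h1' 0)
    have hb1 := abs_le.mp (h1 1); have hb1' := abs_le.mp (h1' 1)
    rw [hr2] at hb0 hb0' hb1 hb1'
    have hdvd : g ∣ ε 0 - ε' 0 := ⟨ε' 1 - ε 1 + g * (t' - t), by linear_combination key⟩
    have he0 : ε 0 = ε' 0 := by
      by_contra hne
      have habs : g ≤ |ε 0 - ε' 0| :=
        Int.le_of_dvd (abs_pos.mpr (sub_ne_zero.mpr hne)) ((dvd_abs g _).mpr hdvd)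
      have hcase : (ε 0 = r ∧ ε' 0 = -r) ∨ (ε 0 = -r ∧ ε' 0 = r) := by
        rcases abs_cases (ε 0 - ε' 0) with ⟨h, _⟩ | ⟨h, _⟩ <;> omega
      rcases hcase with ⟨e1, e2⟩ | ⟨e1, e2⟩
      · have ha : |ε 0| = g / 2 := by rw [e1, hr2]; exact abs_of_nonneg (by omega)
        have ha' : |ε' 0| = g / 2 := by
          rw [e2, hr2, abs_neg]; exact abs_of_nonneg (by omega)
        obtain ⟨hl, hs⟩ := h3 0 ha
        obtain ⟨hl', hs'⟩ := h3' 0 ha'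
        rw [abs_lt, hr2] at hl hl'
        simp only [zero_add] at hl hl' hs hs'
        rw [e1] at hs; rw [e2] at hs'
        have h1pos : 0 ≤ ε 1 := nonneg_of_mul_nonneg_right hs (by omega)
        have h1neg : ε' 1 ≤ 0 := by nlinarith
        have hmul : g * (1 + ε 1 - ε' 1) = g * (g * (t' - t)) := by
          linear_combination hr - e1 + e2 + key
        have hdvd2 : g ∣ 1 + ε 1 - ε' 1 := ⟨t' - t, mul_left_cancel₀ hg0 hmul⟩
        have := Int.le_of_dvd (by omega) hdvd2
        omega
      · have ha : |ε 0| = g / 2 := by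
          rw [e1, hr2, abs_neg]; exact abs_of_nonneg (by omega)
        have ha' : |ε' 0| = g / 2 := by rw [e2, hr2]; exact abs_of_nonneg (by omega)
        obtain ⟨hl, hs⟩ := h3 0 ha
        obtain ⟨hl', hs'⟩ := h3' 0 ha'
        rw [abs_lt, hr2] at hl hl'
        simp only [zero_add] at hl hl' hs hs'
        rw [e1] at hs; rw [e2] at hs'
        have h1pos : 0 ≤ ε' 1 := nonneg_of_mul_nonneg_right hs' (by omega)
        have h1neg : ε 1 ≤ 0 := by nlinarith
        have hmul : g * (1 + ε' 1 - ε 1) = g * (g * (t - t')) := by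
          linear_combination hr - e2 + e1 - key
        have hdvd2 : g ∣ 1 + ε' 1 - ε 1 := ⟨t - t', mul_left_cancel₀ hg0 hmul⟩
        have := Int.le_of_dvd (by omega) hdvd2
        omega
    have hsum' : ∑ i ∈ Finset.range N, ε (i+1) * g ^ i
        = ∑ i ∈ Finset.range N, ε' (i+1) * g ^ i := by
      rw [split1, split1, he0] at hsum
      exact mul_left_cancel₀ hg0 (by omega)
    have hrec := ih (fun i => ε (i+1)) (fun i => ε' (i+1))
      (fun i => h1 (i+1)) (fun i => h1' (i+1))
      (fun i => h3 (i+1)) (fun i => h3' (i+1))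
      (fun i hi => hz (i+1) (by omega)) (fun i hi => hz' (i+1) (by omega)) hsum'
    funext i
    cases i with
    | zero => exact he0
    | succ j => exact congrFun hrec j

theorem stmt6 (g : ℤ) (hg : 2 ≤ g) (hge : Even g) (n : ℤ)
    (ε ε' : ℕ → ℤ)
    (h1 : ∀ i, |ε i| ≤ g / 2) (h1' : ∀ i, |ε' i| ≤ g / 2)
    (h2 : Set.Finite {i | ε i ≠ 0}) (h2' : Set.Finite {i | ε' i ≠ 0})
    (h3 : ∀ i, |ε i| = g / 2 → |ε (i + 1)| < g / 2 ∧ 0 ≤ ε i * ε (i + 1))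
    (h3' : ∀ i, |ε' i| = g / 2 → |ε' (i + 1)| < g / 2 ∧ 0 ≤ ε' i * ε' (i + 1))
    (h4 : n = ∑ᶠ i, ε i * g ^ i) (h4' : n = ∑ᶠ i, ε' i * g ^ i) :
    ε = ε' := by
  set s : Finset ℕ := h2.toFinset ∪ h2'.toFinset with hs
  set N : ℕ := s.sup id + 1 with hN
  have hz : ∀ i, N ≤ i → ε i = 0 := by
    intro i hi
    by_contra h
    have hmem : i ∈ s := Finset.mem_union_left _ (h2.mem_toFinset.mpr h)
    have := Finset.le_sup (f := id) hmem
    simp only [id_eq] at this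
    omega
  have hz' : ∀ i, N ≤ i → ε' i = 0 := by
    intro i hi
    by_contra h
    have hmem : i ∈ s := Finset.mem_union_right _ (h2'.mem_toFinset.mpr h)
    have := Finset.le_sup (f := id) hmem
    simp only [id_eq] at this
    omega
  have hf : ∑ᶠ i, ε i * g ^ i = ∑ i ∈ Finset.range N, ε i * g ^ i := by
    apply finsum_eq_sum_of_support_subset
    intro i hi
    simp only [Finset.coe_range, Set.mem_Iio]
    by_contra h
    have h0 := hz i (by omega)
    simp [Function.mem_support, h0] at hi
  have hf' : ∑ᶠ i, ε' i * g ^ i = ∑ i ∈ Finset.range N, ε' i * g ^ i := by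
    apply finsum_eq_sum_of_support_subset
    intro i hi
    simp only [Finset.coe_range, Set.mem_Iio]
    by_contra h
    have h0 := hz' i (by omega)
    simp [Function.mem_support, h0] at hi
  exact aux g hg hge N ε ε' h1 h1' h3 h3' hz hz' (by rw [← hf, ← hf', ← h4, ← h4'])
end

section
/- Let g be an even integer with g ≥ 2, and let ℓ_g(n) denote the word length of n with respect to the generating set A_g = {0} ∪ {±gⁱ : i ≥ 0} of the additive group ℤ. If n = Σ_{i≥0} εᵢ gⁱ is the representation with εᵢ ∈ {0, ±1, ..., ±g/2}, finitely many εᵢ nonzero, and (|εᵢ| = g/2 implies |ε_{i+1}| < g/2 and εᵢε_{i+1} ≥ 0), then ℓ_g(n) = Σ_{i≥0} |εᵢ|. -/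
namespace S7

def dg (g n : ℤ) : ℤ :=
  if n % g = 0 then 0
  else if n % g < g / 2 then n % g
  else if n % g = g / 2 then (if ((n - g / 2) / g) % g < g / 2 then g / 2 else -(g / 2))
  else n % g - g

def cgAux (g : ℤ) : ℕ → ℤ → ℕ
  | 0, _ => 0
  | f + 1, n => if n = 0 then 0 else (dg g n).natAbs + cgAux g f ((n - dg g n) / g)

def cg (g n : ℤ) : ℕ := cgAux g n.natAbs n

def Cond (k g e q : ℤ) : Prop :=
  |e| < k ∨ (e = k ∧ q % g < k) ∨ (e = -k ∧ k ≤ (q - 1) % g)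

lemma em1 {g a b : ℤ} (m : ℤ) (h : a = b + g * m) (h0 : 0 ≤ b) (h1 : b < g) :
    a % g = b := by
  subst h
  rw [Int.add_mul_emod_self_left, Int.emod_eq_of_lt h0 h1]

lemma em2 {g a b : ℤ} (m : ℤ) (h : a = b + g * m) (h0 : -g ≤ b) (h1 : b < 0) :
    a % g = b + g := by
  apply em1 (m - 1) (by rw [h]; ring) (by linarith) (by linarith)

lemma cg_zero (g : ℤ) : cg g 0 = 0 := rfl

lemma abs_ge {k e q n : ℤ} (hk : 1 ≤ k) (hn : n = e + 2 * k * q) :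
    2 * k * |q| - |e| ≤ |n| := by
  have h1 : |2 * k * q| ≤ |n| + |e| := by
    calc |2 * k * q| = |n + (-e)| := by rw [hn]; ring_nf
    _ ≤ |n| + |e| := by rw [← abs_neg e]; exact abs_add_le _ _
  have h2 : |2 * k * q| = |2 * k| * |q| := abs_mul _ _
  rw [abs_of_nonneg (by linarith : (0:ℤ) ≤ 2 * k)] at h2
  linarith

lemma conv_abs {q n : ℤ} (h : |q| < |n|) : q.natAbs < n.natAbs := by
  rw [Int.abs_eq_natAbs, Int.abs_eq_natAbs] at h
  exact_mod_cast h

lemma dg_spec (k g : ℤ) (hk : 1 ≤ k) (hg : g = 2 * k) (n : ℤ) :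
    ∃ q : ℤ, n = dg g n + g * q ∧ |dg g n| ≤ k ∧ Cond k g (dg g n) q ∧
      (n ≠ 0 → q.natAbs < n.natAbs) := by
  subst hg
  have hk2 : (2 * k) / 2 = k := by omega
  have ht := Int.mul_ediv_add_emod n (2 * k)
  have hr0 : 0 ≤ n % (2 * k) := Int.emod_nonneg n (by omega)
  have hr1 : n % (2 * k) < 2 * k := Int.emod_lt_of_pos n (by omega)
  set t := n / (2 * k) with htdef
  set r := n % (2 * k) with hrdef
  clear_value t r
  unfold dg
  rw [← hrdef, hk2]
  split_ifs with h1 h2 h3 h4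
  · -- r = 0, dg = 0
    refine ⟨t, by linarith, by simp only [abs_zero]; omega,
      Or.inl (by simp only [abs_zero]; omega), ?_⟩
    intro hn0
    apply conv_abs
    have hne : t ≠ 0 := by rintro rfl; apply hn0; omega
    have hb := abs_ge hk (e := 0) (q := t) (n := n) (by linarith)
    have ho : 1 ≤ |t| := Int.one_le_abs hne
    simp only [abs_zero] at hb
    have hint : 0 ≤ (2 * k - 1) * (|t| - 1) :=
      mul_nonneg (by linarith) (by linarith)
    linarith [hint]
  · -- 0 < r < k, dg = r
    refine ⟨t, by linarith, by rw [abs_of_nonneg hr0]; omega,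
      Or.inl (by rw [abs_of_nonneg hr0]; omega), ?_⟩
    intro hn0
    apply conv_abs
    have hb := abs_ge hk (e := r) (q := t) (n := n) (by linarith)
    rw [abs_of_nonneg hr0] at hb
    rcases eq_or_ne t 0 with rfl | hne
    · have : 1 ≤ |n| := Int.one_le_abs hn0
      simp only [abs_zero]; linarith
    · have ho : 1 ≤ |t| := Int.one_le_abs hne
      have hint : 0 ≤ (2 * k - 1) * (|t| - 1) :=
        mul_nonneg (by linarith) (by linarith)
      -- |n| ≥ 2k|t| - r ≥ 2k|t| - (k-1), and 2k|t| ≥ 2k + |t| - 1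
      linarith [hint]
  · -- r = k, tie, dg = +k ; h4 : t % (2k) < k
    have hnk : n - k = 2 * k * t := by linarith
    rw [hnk, Int.mul_ediv_cancel_left _ (by omega : (2:ℤ) * k ≠ 0)] at h4
    refine ⟨t, by linarith, by rw [abs_of_nonneg (by omega : (0:ℤ) ≤ k)],
      Or.inr (Or.inl ⟨rfl, h4⟩), ?_⟩
    intro hn0
    apply conv_abs
    have hb := abs_ge hk (e := k) (q := t) (n := n) (by linarith)
    rw [abs_of_nonneg (by omega : (0:ℤ) ≤ k)] at hb
    rcases eq_or_ne t 0 with rfl | hne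
    · have : 1 ≤ |n| := Int.one_le_abs hn0
      simp only [abs_zero]; linarith
    · have ho : 1 ≤ |t| := Int.one_le_abs hne
      rcases eq_or_lt_of_le ho with ho1 | ho2
      · -- |t| = 1
        have : t = 1 ∨ t = -1 := by
          rcases abs_cases t with ⟨h, _⟩ | ⟨h, _⟩ <;> omega
        rcases this with rfl | rfl
        · -- n = 3k
          have hn3 : n = 3 * k := by linarith
          rw [hn3, abs_of_nonneg (by omega : (0:ℤ) ≤ 3 * k),
            show |(1:ℤ)| = 1 from abs_one]
          omega
        · -- t = -1 : contradicts h4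
          exfalso
          have : (-1 : ℤ) % (2 * k) = -1 + 2 * k := em2 0 (by ring) (by omega) (by omega)
          omega
      · have hint : 0 ≤ (2 * k - 1) * (|t| - 2) :=
          mul_nonneg (by linarith) (by linarith)
        linarith [hint]
  · -- r = k, tie, dg = -k ; h4 : ¬ t % (2k) < k
    have hnk : n - k = 2 * k * t := by linarith
    rw [hnk, Int.mul_ediv_cancel_left _ (by omega : (2:ℤ) * k ≠ 0)] at h4
    push_neg at h4
    refine ⟨t + 1, by linarith, by rw [abs_neg, abs_of_nonneg (by omega : (0:ℤ) ≤ k)],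
      Or.inr (Or.inr ⟨rfl, by simpa using h4⟩), ?_⟩
    intro hn0
    apply conv_abs
    have hb := abs_ge hk (e := -k) (q := t + 1) (n := n) (by linarith)
    rw [abs_neg, abs_of_nonneg (by omega : (0:ℤ) ≤ k)] at hb
    rcases eq_or_ne (t + 1) 0 with h0 | hne
    · have : 1 ≤ |n| := Int.one_le_abs hn0
      rw [h0]
      simp only [abs_zero]; linarith
    · have ho : 1 ≤ |t + 1| := Int.one_le_abs hne
      rcases eq_or_lt_of_le ho with ho1 | ho2
      · have : t + 1 = 1 ∨ t + 1 = -1 := by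
          rcases abs_cases (t + 1) with ⟨h, _⟩ | ⟨h, _⟩ <;> omega
        rcases this with h01 | h01
        · -- t = 0 : contradicts h4
          exfalso
          obtain rfl : t = 0 := by omega
          simp only [Int.zero_emod] at h4
          omega
        · -- t+1 = -1, n = -3k
          obtain rfl : t = -2 := by omega
          have hn3 : n = -(3 * k) := by linarith
          rw [hn3, abs_neg, abs_of_nonneg (by omega : (0:ℤ) ≤ 3 * k), ← ho1]
          omega
      · have hint : 0 ≤ (2 * k - 1) * (|t + 1| - 2) :=
          mul_nonneg (by linarith) (by linarith)
        linarith [hint]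
  · -- k < r < 2k, dg = r - 2k
    push_neg at h1 h2 h3
    have h2' : k < r := lt_of_le_of_ne h2 (Ne.symm h3)
    refine ⟨t + 1, by linarith,
      by rw [abs_of_nonpos (show r - 2 * k ≤ 0 by omega)]; omega,
      Or.inl (by rw [abs_of_nonpos (show r - 2 * k ≤ 0 by omega)]; omega), ?_⟩
    intro hn0
    apply conv_abs
    have hb := abs_ge hk (e := r - 2 * k) (q := t + 1) (n := n) (by linarith)
    rw [abs_of_nonpos (show r - 2 * k ≤ 0 by omega)] at hb
    rcases eq_or_ne (t + 1) 0 with h0 | hne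
    · have : 1 ≤ |n| := Int.one_le_abs hn0
      rw [h0]
      simp only [abs_zero]; linarith
    · have ho : 1 ≤ |t + 1| := Int.one_le_abs hne
      have hint : 0 ≤ (2 * k - 1) * (|t + 1| - 1) :=
        mul_nonneg (by linarith) (by linarith)
      linarith [hint]

end S7

namespace S7

lemma cgAux_stab (k g : ℤ) (hk : 1 ≤ k) (hg : g = 2 * k) :
    ∀ f f' (n : ℤ), n.natAbs ≤ f → n.natAbs ≤ f' → cgAux g f n = cgAux g f' n := by
  intro f
  induction f with
  | zero =>
    intro f' n hf hf'
    have : n = 0 := by omega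
    subst this
    cases f' <;> simp [cgAux]
  | succ f ih =>
    intro f' n hf hf'
    rcases eq_or_ne n 0 with rfl | hn
    · cases f' <;> simp [cgAux]
    · obtain ⟨f'', rfl⟩ : ∃ f'', f' = f'' + 1 := by
        refine ⟨f' - 1, ?_⟩
        have : 1 ≤ n.natAbs := by omega
        omega
      simp only [cgAux, if_neg hn]
      congr 1
      obtain ⟨q, hq, -, -, hlt⟩ := dg_spec k g hk hg n
      have hQ : (n - dg g n) / g = q := by
        rw [show n - dg g n = g * q by linarith, Int.mul_ediv_cancel_left _ (by omega)]
      rw [hQ]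
      have hlt' := hlt hn
      exact ih f'' q (by omega) (by omega)

lemma cg_unfold (k g : ℤ) (hk : 1 ≤ k) (hg : g = 2 * k) (n : ℤ) (hn : n ≠ 0) :
    cg g n = (dg g n).natAbs + cg g ((n - dg g n) / g) := by
  have h1 : 1 ≤ n.natAbs := by omega
  obtain ⟨f, hf⟩ : ∃ f, n.natAbs = f + 1 := ⟨n.natAbs - 1, by omega⟩
  obtain ⟨q, hq, -, -, hlt⟩ := dg_spec k g hk hg n
  have hQ : (n - dg g n) / g = q := by
    rw [show n - dg g n = g * q by linarith, Int.mul_ediv_cancel_left _ (by omega)]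
  rw [cg, hf]
  simp only [cgAux, if_neg hn]
  congr 1
  rw [hQ]
  have hlt' := hlt hn
  exact cgAux_stab k g hk hg f q.natAbs q (by omega) le_rfl

lemma dg_uniq (k g : ℤ) (hk : 1 ≤ k) (hg : g = 2 * k) {n e q : ℤ}
    (hn : n = e + g * q) (he : |e| ≤ k) (hc : Cond k g e q) :
    dg g n = e ∧ (n - dg g n) / g = q := by
  obtain ⟨q', hq', hd', hc', -⟩ := dg_spec k g hk hg n
  have he' : -k ≤ e ∧ e ≤ k := abs_le.mp he
  have hd'' : -k ≤ dg g n ∧ dg g n ≤ k := abs_le.mp hd'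
  have hdiff : e - dg g n = g * (q' - q) := by linear_combination hq' - hn
  have habs : |e - dg g n| ≤ 2 * k := by
    rw [abs_le]; omega
  have hw : -1 ≤ q' - q ∧ q' - q ≤ 1 := by
    rw [hdiff, abs_mul, abs_of_nonneg (by omega : (0:ℤ) ≤ g)] at habs
    have hgk : g = 2 * k := hg
    rw [hgk] at habs
    constructor <;> nlinarith [abs_nonneg (q' - q), le_abs_self (q' - q),
      neg_abs_le (q' - q)]
  have hde : dg g n = e := by
    rcases (by omega : q' - q = 0 ∨ q' - q = 1 ∨ q' - q = -1) with hz | hz | hz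
    · rw [hz, mul_zero] at hdiff; omega
    · rw [hz, mul_one] at hdiff
      -- e = k, dg = -k
      exfalso
      rcases hc with hx | ⟨hx, hcc⟩ | ⟨hx, _⟩
      · rw [abs_lt] at hx; omega
      · rcases hc' with hy | ⟨hy, _⟩ | ⟨hy, hyc⟩
        · rw [abs_lt] at hy; omega
        · omega
        · rw [show q' - 1 = q by omega] at hyc
          omega
      · omega
    · rw [hz] at hdiff
      simp only [mul_neg_one] at hdiff
      exfalso
      rcases hc with hx | ⟨hx, _⟩ | ⟨hx, hcc⟩
      · rw [abs_lt] at hx; omega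
      · omega
      · rcases hc' with hy | ⟨hy, hyc⟩ | ⟨hy, _⟩
        · rw [abs_lt] at hy; omega
        · rw [show q' = q - 1 by omega] at hyc
          omega
        · omega
  refine ⟨hde, ?_⟩
  rw [hde, show n - e = g * q by linarith, Int.mul_ediv_cancel_left _ (by omega)]

lemma cg_split (k g : ℤ) (hk : 1 ≤ k) (hg : g = 2 * k) {n e q : ℤ}
    (hn : n = e + g * q) (he : |e| ≤ k) (hc : Cond k g e q) :
    cg g n = e.natAbs + cg g q := by
  rcases eq_or_ne n 0 with rfl | hn0
  · have he' : -k ≤ e ∧ e ≤ k := abs_le.mp he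
    have hq0 : q = 0 := by
      by_contra hq
      have h1q : 1 ≤ |q| := Int.one_le_abs hq
      have hb := abs_ge hk (e := e) (q := q) (n := (0:ℤ)) (by rw [hg] at hn; linarith)
      simp only [abs_zero] at hb
      nlinarith [abs_nonneg e, abs_le.mpr he']
    subst hq0
    have he0 : e = 0 := by rw [mul_zero, add_zero] at hn; omega
    subst he0
    simp [cg_zero]
  · obtain ⟨hde, hQ⟩ := dg_uniq k g hk hg hn he hc
    rw [cg_unfold k g hk hg n hn0, hQ, hde]

lemma cg_decomp (k g : ℤ) (hk : 1 ≤ k) (hg : g = 2 * k) {n : ℤ} (hn : n ≠ 0) :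
    ∃ e q : ℤ, n = e + g * q ∧ |e| ≤ k ∧ Cond k g e q ∧
      cg g n = e.natAbs + cg g q ∧ q.natAbs < n.natAbs := by
  obtain ⟨q, hq, hd, hc, hlt⟩ := dg_spec k g hk hg n
  have hQ : (n - dg g n) / g = q := by
    rw [show n - dg g n = g * q by linarith, Int.mul_ediv_cancel_left _ (by omega)]
  exact ⟨dg g n, q, hq, hd, hc, by rw [cg_unfold k g hk hg n hn, hQ], hlt hn⟩

end S7

namespace S7

lemma cond_k {k g e q : ℤ} (hk : 1 ≤ k) (he : e = k) (hc : Cond k g e q) :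
    q % g < k := by
  rcases hc with hx | ⟨-, h⟩ | ⟨hx, -⟩
  · rw [he, abs_of_nonneg (by omega)] at hx; omega
  · exact h
  · omega

lemma cond_negk {k g e q : ℤ} (hk : 1 ≤ k) (he : e = -k) (hc : Cond k g e q) :
    k ≤ (q - 1) % g := by
  rcases hc with hx | ⟨hx, -⟩ | ⟨-, h⟩
  · rw [he, abs_neg, abs_of_nonneg (by omega)] at hx; omega
  · omega
  · exact h

lemma cg_one (k g : ℤ) (hk : 1 ≤ k) (hg : g = 2 * k) : cg g 1 = 1 := by
  have h0 : (1:ℤ) = 1 + g * 0 := by ring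
  have hc : Cond k g 1 0 := by
    rcases eq_or_lt_of_le hk with h | h
    · exact Or.inr (Or.inl ⟨by omega, by rw [Int.zero_emod]; omega⟩)
    · exact Or.inl (by rw [abs_one]; omega)
  have := cg_split k g hk hg h0 (by rw [abs_one]; omega) hc
  simpa [cg_zero] using this

lemma cg_mulg (k g : ℤ) (hk : 1 ≤ k) (hg : g = 2 * k) (x : ℤ) :
    cg g (g * x) = cg g x := by
  have := cg_split k g hk hg (show g * x = 0 + g * x by ring)
    (by rw [abs_zero]; omega) (Or.inl (by rw [abs_zero]; omega))
  simpa using this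

lemma cg_pow (k g : ℤ) (hk : 1 ≤ k) (hg : g = 2 * k) (j : ℕ) : cg g (g ^ j) = 1 := by
  induction j with
  | zero => simpa using cg_one k g hk hg
  | succ j ih => rw [pow_succ, mul_comm, cg_mulg k g hk hg]; exact ih

lemma cg_sym (k g : ℤ) (hk : 1 ≤ k) (hg : g = 2 * k) :
    ∀ N (n : ℤ), n.natAbs ≤ N → cg g (-n) = cg g n := by
  intro N
  induction N with
  | zero =>
    intro n hn
    obtain rfl : n = 0 := by omega
    rw [neg_zero]
  | succ N ih =>
    intro n hN
    rcases eq_or_ne n 0 with rfl | hn0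
    · rw [neg_zero]
    · obtain ⟨e, q, hn, he, hc, hcg, hlt⟩ := cg_decomp k g hk hg hn0
      have he2 := abs_le.mp he
      have hg0 : (0:ℤ) < g := by omega
      have hc' : Cond k g (-e) (-q) := by
        rcases hc with hx | ⟨hek, hu⟩ | ⟨hek, hv⟩
        · exact Or.inl (by rw [abs_neg]; exact hx)
        · -- e = k : show k ≤ (-q - 1) % g
          have hu0 : 0 ≤ q % g := Int.emod_nonneg q (by omega)
          have htu := Int.mul_ediv_add_emod q g
          have hm : (-q - 1) % g = g - 1 - q % g :=
            em1 (-(q / g) - 1) (by linear_combination htu) (by omega) (by omega)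
          exact Or.inr (Or.inr ⟨by rw [hek], by omega⟩)
        · -- e = -k : show (-q) % g < k
          have hv1 : (q - 1) % g < g := Int.emod_lt_of_pos (q - 1) hg0
          have htu := Int.mul_ediv_add_emod (q - 1) g
          have hm : (-q) % g = g - 1 - (q - 1) % g :=
            em1 (-((q - 1) / g) - 1) (by linear_combination htu) (by omega) (by omega)
          exact Or.inr (Or.inl ⟨by rw [hek, neg_neg], by omega⟩)
      have hs : cg g (-n) = (-e).natAbs + cg g (-q) :=
        cg_split k g hk hg (by rw [hn]; ring) (by rw [abs_neg]; exact he) hc'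
      have hihq : cg g (-q) = cg g q := by
        have : (-q).natAbs ≤ N := by omega
        -- ih expects (-q).natAbs ≤ N with n := -q ; then -(-q) = q
        have h2 := ih (-q) this
        rw [neg_neg] at h2
        exact h2.symm
      rw [hs, hihq, Int.natAbs_neg]
      exact hcg.symm

lemma cg_lip0 (k g : ℤ) (hk : 1 ≤ k) (hg : g = 2 * k) :
    ∀ N (n : ℤ), n.natAbs ≤ N → cg g (n + 1) ≤ cg g n + 1 := by
  intro N
  induction N with
  | zero =>
    intro n hn
    obtain rfl : n = 0 := by omega
    rw [zero_add, cg_one k g hk hg, cg_zero]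
  | succ N ih =>
    intro n hN
    rcases eq_or_ne n 0 with rfl | hn0
    · rw [zero_add, cg_one k g hk hg, cg_zero]
    · obtain ⟨e, q, hn, he, hc, hcg, hlt⟩ := cg_decomp k g hk hg hn0
      have he2 := abs_le.mp he
      have hg0 : (0:ℤ) < g := by omega
      have hqN : q.natAbs ≤ N := by omega
      by_cases hek : e = k
      · -- C : n+1 = (1-k) + g*(q+1)
        have hs : cg g (n + 1) = (1 - k).natAbs + cg g (q + 1) :=
          cg_split k g hk hg (by rw [hn, hek, hg]; ring)
            (by rw [abs_le]; omega) (Or.inl (by rw [abs_lt]; omega))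
        have hih := ih q hqN
        rw [hek] at hcg
        omega
      · by_cases hek1 : e = k - 1
        · by_cases hqg : q % g < k
          · -- B1 : n+1 = k + g*q
            have hs : cg g (n + 1) = k.natAbs + cg g q :=
              cg_split k g hk hg (by rw [hn, hek1]; ring)
                (by rw [abs_of_nonneg (by omega)]) (Or.inr (Or.inl ⟨rfl, hqg⟩))
            rw [hek1] at hcg
            omega
          · push_neg at hqg
            have hq0 : q ≠ 0 := by
              rintro rfl
              rw [Int.zero_emod] at hqg
              omega
            have hclaim : cg g (q + 1) ≤ cg g q := by
              obtain ⟨d, p, hq1, hd, hcd, hcgq, hlt2⟩ := cg_decomp k g hk hg hq0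
              have hd2 := abs_le.mp hd
              have hdc : d < 0 ∨ d = k := by
                by_contra hx
                push_neg at hx
                obtain ⟨hd0, hdk⟩ := hx
                have : q % g = d := em1 p hq1 hd0 (by omega)
                omega
              rcases hdc with hdneg | hdk
              · have hs2 : cg g (q + 1) = (d + 1).natAbs + cg g p :=
                  cg_split k g hk hg (by rw [hq1]; ring)
                    (by rw [abs_le]; omega) (Or.inl (by rw [abs_lt]; omega))
                omega
              · have hpg : p % g < k := cond_k hk hdk hcd
                have hs2 : cg g (q + 1) = (1 - k).natAbs + cg g (p + 1) :=
                  cg_split k g hk hg (by rw [hq1, hdk, hg]; ring)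
                    (by rw [abs_le]; omega) (Or.inl (by rw [abs_lt]; omega))
                have hih2 := ih p (by omega)
                rw [hdk] at hcgq
                omega
            have hs : cg g (n + 1) = (-k).natAbs + cg g (q + 1) :=
              cg_split k g hk hg (by rw [hn, hek1, hg]; ring)
                (by rw [abs_neg, abs_of_nonneg (by omega)])
                (Or.inr (Or.inr ⟨rfl, by rw [show q + 1 - 1 = q by ring]; exact hqg⟩))
            rw [hek1] at hcg
            omega
        · -- A : -k ≤ e ≤ k-2
          have hs : cg g (n + 1) = (e + 1).natAbs + cg g q :=
            cg_split k g hk hg (by rw [hn]; ring)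
              (by rw [abs_le]; omega) (Or.inl (by rw [abs_lt]; omega))
          omega

end S7

namespace S7

lemma cg_lip1 (k g : ℤ) (hk : 1 ≤ k) (hg : g = 2 * k) (n : ℤ) :
    cg g (n + g) ≤ cg g n + 1 := by
  have lip0' : ∀ m : ℤ, cg g (m + 1) ≤ cg g m + 1 :=
    fun m => cg_lip0 k g hk hg m.natAbs m le_rfl
  rcases eq_or_ne n 0 with rfl | hn0
  · have h1 : cg g (g * 1) = cg g 1 := cg_mulg k g hk hg 1
    rw [mul_one] at h1
    rw [zero_add, h1, cg_one k g hk hg, cg_zero]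
  · obtain ⟨e, q, hn, he, hc, hcg, hlt⟩ := cg_decomp k g hk hg hn0
    have he2 := abs_le.mp he
    have hg0 : (0:ℤ) < g := by omega
    by_cases hek : e = k
    · have hqg := cond_k hk hek hc
      have hu0 : 0 ≤ q % g := Int.emod_nonneg q (by omega)
      have htu := Int.mul_ediv_add_emod q g
      by_cases hql : q % g < k - 1
      · have hm : (q + 1) % g = q % g + 1 :=
          em1 (q / g) (by linear_combination -htu) (by omega) (by omega)
        have hs : cg g (n + g) = k.natAbs + cg g (q + 1) :=
          cg_split k g hk hg (by rw [hn, hek]; ring)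
            (by rw [abs_of_nonneg (by omega)]) (Or.inr (Or.inl ⟨rfl, by omega⟩))
        have hih := lip0' q
        rw [hek] at hcg
        omega
      · have hqe : q % g = k - 1 := by omega
        have hm : (q + 1) % g = k :=
          em1 (q / g) (by linear_combination -htu + hqe) (by omega) (by omega)
        have hs : cg g (n + g) = (-k).natAbs + cg g (q + 2) :=
          cg_split k g hk hg (by rw [hn, hek, hg]; ring)
            (by rw [abs_neg, abs_of_nonneg (by omega)])
            (Or.inr (Or.inr ⟨rfl, by rw [show q + 2 - 1 = q + 1 by ring, hm]⟩))
        rcases eq_or_ne q 0 with rfl | hq0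
        · have hk1 : k = 1 := by rw [Int.zero_emod] at hqe; omega
          have h2 : cg g ((0:ℤ) + 2) = 1 := by
            rw [show (0:ℤ) + 2 = g * 1 by rw [hg, hk1]; ring, cg_mulg k g hk hg,
              cg_one k g hk hg]
          rw [hek] at hcg
          rw [cg_zero] at hcg
          omega
        · obtain ⟨d, p, hq1, hd, hcd, hcgq, hlt2⟩ := cg_decomp k g hk hg hq0
          have hd2 := abs_le.mp hd
          have hdval : d = k - 1 := by
            rcases le_or_gt 0 d with h0 | h0
            · have : q % g = d := em1 p hq1 h0 (by omega)
              omega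
            · have : q % g = d + g := em2 p hq1 (by omega) h0
              omega
          have hs2 : cg g (q + 2) = (1 - k).natAbs + cg g (p + 1) :=
            cg_split k g hk hg (by rw [hq1, hdval, hg]; ring)
              (by rw [abs_le]; omega) (Or.inl (by rw [abs_lt]; omega))
          have hih := lip0' p
          rw [hdval] at hcgq
          rw [hek] at hcg
          omega
    · by_cases hek' : e = -k
      · have hv := cond_negk hk hek' hc
        have hv1 : (q - 1) % g < g := Int.emod_lt_of_pos (q - 1) hg0
        have htu := Int.mul_ediv_add_emod (q - 1) g
        by_cases hv2 : (q - 1) % g ≤ 2 * k - 2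
        · have hm : q % g = (q - 1) % g + 1 :=
            em1 ((q - 1) / g) (by linear_combination -htu) (by omega) (by omega)
          have hs : cg g (n + g) = (-k).natAbs + cg g (q + 1) :=
            cg_split k g hk hg (by rw [hn, hek']; ring)
              (by rw [abs_neg, abs_of_nonneg (by omega)])
              (Or.inr (Or.inr ⟨rfl, by rw [show q + 1 - 1 = q by ring, hm]; omega⟩))
          have hih := lip0' q
          rw [hek'] at hcg
          omega
        · have hvv : (q - 1) % g = 2 * k - 1 := by omega
          have hm : q % g = 0 :=
            em1 ((q - 1) / g + 1) (by linear_combination -htu + hvv - hg)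
              le_rfl (by omega)
          have hs : cg g (n + g) = k.natAbs + cg g q :=
            cg_split k g hk hg (by rw [hn, hek', hg]; ring)
              (by rw [abs_of_nonneg (by omega)]) (Or.inr (Or.inl ⟨rfl, by omega⟩))
          rw [hek'] at hcg
          omega
      · -- |e| < k
        have helt : |e| < k := by
          rcases lt_or_ge (|e|) k with h | h
          · exact h
          · exfalso
            rcases abs_cases e with ⟨h0, -⟩ | ⟨h0, -⟩ <;> omega
        have hs : cg g (n + g) = e.natAbs + cg g (q + 1) :=
          cg_split k g hk hg (by rw [hn]; ring) he
            (Or.inl helt)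
        have hih := lip0' q
        omega

lemma cg_lipj (k g : ℤ) (hk : 1 ≤ k) (hg : g = 2 * k) :
    ∀ (j : ℕ) (n : ℤ), cg g (n + g ^ j) ≤ cg g n + 1 := by
  intro j
  induction j with
  | zero =>
    intro n
    rw [pow_zero]
    exact cg_lip0 k g hk hg n.natAbs n le_rfl
  | succ j ihj =>
    intro n
    cases j with
    | zero =>
      rw [pow_one]
      exact cg_lip1 k g hk hg n
    | succ i =>
      rcases eq_or_ne n 0 with rfl | hn0
      · rw [zero_add, cg_pow k g hk hg, cg_zero]
      · obtain ⟨e, q, hn, he, hc, hcg, hlt⟩ := cg_decomp k g hk hg hn0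
        have hg0 : (0:ℤ) < g := by omega
        have hc' : Cond k g e (q + g ^ (i + 1)) := by
          rcases hc with hx | ⟨hek, hu⟩ | ⟨hek, hv⟩
          · exact Or.inl hx
          · have hu0 : 0 ≤ q % g := Int.emod_nonneg q (by omega)
            have hu1 : q % g < g := Int.emod_lt_of_pos q hg0
            have htu := Int.mul_ediv_add_emod q g
            have hm : (q + g ^ (i + 1)) % g = q % g :=
              em1 (q / g + g ^ i) (by rw [pow_succ]; linear_combination -htu)
                hu0 hu1
            exact Or.inr (Or.inl ⟨hek, by omega⟩)
          · have hu0 : 0 ≤ (q - 1) % g := Int.emod_nonneg (q - 1) (by omega)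
            have hu1 : (q - 1) % g < g := Int.emod_lt_of_pos (q - 1) hg0
            have htu := Int.mul_ediv_add_emod (q - 1) g
            have hm : (q + g ^ (i + 1) - 1) % g = (q - 1) % g :=
              em1 ((q - 1) / g + g ^ i) (by rw [pow_succ]; linear_combination -htu)
                hu0 hu1
            exact Or.inr (Or.inr ⟨hek, by omega⟩)
        have hs : cg g (n + g ^ (i + 1 + 1)) = e.natAbs + cg g (q + g ^ (i + 1)) :=
          cg_split k g hk hg (by rw [hn, pow_succ]; ring) he hc'
        have hih := ihj q
        omega

lemma cg_lipj_neg (k g : ℤ) (hk : 1 ≤ k) (hg : g = 2 * k) (j : ℕ) (n : ℤ) :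
    cg g (n - g ^ j) ≤ cg g n + 1 := by
  have sym : ∀ m : ℤ, cg g (-m) = cg g m :=
    fun m => cg_sym k g hk hg m.natAbs m le_rfl
  have h1 : cg g (n - g ^ j) = cg g (-n + g ^ j) := by
    rw [← sym (n - g ^ j), show -(n - g ^ j) = -n + g ^ j by ring]
  rw [h1]
  calc cg g (-n + g ^ j) ≤ cg g (-n) + 1 := cg_lipj k g hk hg j (-n)
  _ = cg g n + 1 := by rw [sym n]

end S7

def Ag (g : ℤ) : Set ℤ := {0} ∪ {x | ∃ i : ℕ, x = g ^ i ∨ x = -g ^ i}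

noncomputable def lg (g : ℤ) (n : ℤ) : ℕ :=
  sInf {h | ∃ l : List ℤ, (∀ a ∈ l, a ∈ Ag g) ∧ l.sum = n ∧ l.length = h}

namespace S7

lemma list_lb (k g : ℤ) (hk : 1 ≤ k) (hg : g = 2 * k) :
    ∀ l : List ℤ, (∀ a ∈ l, a ∈ Ag g) → cg g l.sum ≤ l.length := by
  intro l
  induction l with
  | nil => intro _; simp [cg_zero]
  | cons a l ih =>
    intro h
    have ha := h a (List.mem_cons_self)
    have hl := ih fun x hx => h x (List.mem_cons_of_mem a hx)
    rw [List.sum_cons, List.length_cons]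
    rcases ha with ha | ⟨i, hi | hi⟩
    · rw [Set.mem_singleton_iff] at ha
      rw [ha, zero_add]
      omega
    · rw [hi, add_comm]
      have := cg_lipj k g hk hg i l.sum
      omega
    · rw [hi, add_comm]
      have := cg_lipj_neg k g hk hg i l.sum
      rw [show l.sum + -g ^ i = l.sum - g ^ i by ring]
      omega

lemma sum_shift (g : ℤ) (f : ℕ → ℤ) (M : ℕ) :
    ∑ i ∈ Finset.range (M + 1), f i * g ^ i =
      f 0 + g * ∑ i ∈ Finset.range M, f (i + 1) * g ^ i := by
  rw [Finset.sum_range_succ', pow_zero, mul_one, Finset.mul_sum, add_comm]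
  congr 1
  exact Finset.sum_congr rfl fun i _ => by ring

lemma canon (k g : ℤ) (hk : 1 ≤ k) (hg : g = 2 * k) :
    ∀ (N : ℕ) (ε : ℕ → ℤ) (n : ℤ),
      (∀ i, |ε i| ≤ k) →
      (∀ i, |ε i| = k → |ε (i + 1)| < k ∧ 0 ≤ ε i * ε (i + 1)) →
      (∀ i, N ≤ i → ε i = 0) →
      n = ∑ i ∈ Finset.range N, ε i * g ^ i →
      (cg g n : ℤ) = ∑ i ∈ Finset.range N, |ε i| := by
  intro N
  induction N with
  | zero =>
    intro ε n _ _ _ hn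
    simp only [Finset.range_zero, Finset.sum_empty] at hn ⊢
    rw [hn, cg_zero]
    rfl
  | succ N ih =>
    intro ε n h1 h3 hs hn
    set q := ∑ i ∈ Finset.range N, ε (i + 1) * g ^ i with hq
    have hnq : n = ε 0 + g * q := by rw [hn, sum_shift]
    have hcond : Cond k g (ε 0) q := by
      rcases lt_or_ge (|ε 0|) k with hlt | hge
      · exact Or.inl hlt
      · have habs : |ε 0| = k := le_antisymm (h1 0) hge
        obtain ⟨hε1, hsign⟩ := h3 0 habs
        simp only [Nat.zero_add] at hε1 hsign
        have hε1b := abs_lt.mp hε1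
        have hqmod : ∃ m, q = ε 1 + g * m := by
          cases N with
          | zero =>
            refine ⟨0, by simp [hq, hs 1 (by omega)]⟩
          | succ M =>
            exact ⟨∑ i ∈ Finset.range M, ε (i + 2) * g ^ i, by
              rw [hq, sum_shift g (fun i => ε (i + 1)) M]⟩
        obtain ⟨m, hm⟩ := hqmod
        rcases abs_cases (ε 0) with ⟨h0, h0p⟩ | ⟨h0, h0n⟩
        · have he0 : ε 0 = k := by omega
          have hε1p : 0 ≤ ε 1 := by
            rcases le_or_gt 0 (ε 1) with h | h
            · exact h
            · exfalso; nlinarith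
          have hqm : q % g = ε 1 := em1 m hm hε1p (by omega)
          exact Or.inr (Or.inl ⟨he0, by omega⟩)
        · have he0 : ε 0 = -k := by omega
          have hε1n : ε 1 ≤ 0 := by
            rcases le_or_gt (ε 1) 0 with h | h
            · exact h
            · exfalso; nlinarith
          have hqm : (q - 1) % g = (ε 1 - 1) + g :=
            em2 m (by rw [hm]; ring) (by omega) (by omega)
          exact Or.inr (Or.inr ⟨he0, by omega⟩)
    have hsplit := cg_split k g hk hg hnq (h1 0) hcond
    have hih := ih (fun i => ε (i + 1)) q (fun i => h1 (i + 1))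
      (fun i hi => h3 (i + 1) hi) (fun i hi => hs (i + 1) (by omega)) hq
    rw [Finset.sum_range_succ' (fun i => |ε i|) N]
    rw [hsplit]
    push_cast [Int.natCast_natAbs]
    rw [hih]
    ring

lemma upper (g : ℤ) (N : ℕ) (ε : ℕ → ℤ) :
    ∃ l : List ℤ, (∀ a ∈ l, a ∈ Ag g) ∧
      l.sum = ∑ i ∈ Finset.range N, ε i * g ^ i ∧
      (l.length : ℤ) = ∑ i ∈ Finset.range N, |ε i| := by
  induction N with
  | zero => exact ⟨[], by simp, by simp, by simp⟩
  | succ N ih =>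
    obtain ⟨l, hmem, hsum, hlen⟩ := ih
    refine ⟨l ++ List.replicate (ε N).natAbs (if 0 ≤ ε N then g ^ N else -g ^ N),
      ?_, ?_, ?_⟩
    · intro a hax
      rcases List.mem_append.mp hax with h | h
      · exact hmem a h
      · have := List.eq_of_mem_replicate h
        right
        refine ⟨N, ?_⟩
        split_ifs at this
        · exact Or.inl this
        · exact Or.inr this
    · rw [List.sum_append, List.sum_replicate, hsum, Finset.sum_range_succ]
      congr 1
      rw [nsmul_eq_mul]
      rcases le_or_gt 0 (ε N) with h | h
      · rw [if_pos h, Int.natAbs_of_nonneg h]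
      · rw [if_neg (by omega), show ((ε N).natAbs : ℤ) = -ε N by
          rw [Int.ofNat_natAbs_of_nonpos (by omega)]]
        ring
    · rw [List.length_append, List.length_replicate, Finset.sum_range_succ]
      push_cast [Int.natCast_natAbs]
      rw [← hlen]

end S7

theorem stmt7 (g : ℤ) (hg : 2 ≤ g) (hge : Even g) (n : ℤ) (ε : ℕ → ℤ)
    (h1 : ∀ i, |ε i| ≤ g / 2)
    (h2 : Set.Finite {i | ε i ≠ 0})
    (h3 : ∀ i, |ε i| = g / 2 → |ε (i + 1)| < g / 2 ∧ 0 ≤ ε i * ε (i + 1))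
    (h4 : n = ∑ᶠ i, ε i * g ^ i) :
    (lg g n : ℤ) = ∑ᶠ i, |ε i| := by
  obtain ⟨k, hk2⟩ := hge
  have hgk : g = 2 * k := by omega
  have hk : 1 ≤ k := by omega
  have hg2 : g / 2 = k := by omega
  rw [hg2] at h1 h3
  -- obtain a support bound
  obtain ⟨N, hN⟩ := (Set.Finite.bddAbove h2)
  have hs : ∀ i, N + 1 ≤ i → ε i = 0 := by
    intro i hi
    by_contra hne
    have := hN (Set.mem_setOf_eq ▸ hne : i ∈ {i | ε i ≠ 0})
    omega
  have hsupp : Function.support (fun i => ε i * g ^ i) ⊆ ↑(Finset.range (N + 1)) := by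
    intro i hi
    simp only [Function.mem_support] at hi
    simp only [Finset.coe_range, Set.mem_Iio]
    by_contra hx
    rw [hs i (by omega), zero_mul] at hi
    exact hi rfl
  have hsupp2 : Function.support (fun i => |ε i|) ⊆ ↑(Finset.range (N + 1)) := by
    intro i hi
    simp only [Function.mem_support] at hi
    simp only [Finset.coe_range, Set.mem_Iio]
    by_contra hx
    rw [hs i (by omega), abs_zero] at hi
    exact hi rfl
  have hn : n = ∑ i ∈ Finset.range (N + 1), ε i * g ^ i := by
    rw [h4, finsum_eq_sum_of_support_subset _ hsupp]
  have habs : ∑ᶠ i, |ε i| = ∑ i ∈ Finset.range (N + 1), |ε i| :=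
    finsum_eq_sum_of_support_subset _ hsupp2
  have hcanon := S7.canon k g hk hgk (N + 1) ε n h1 h3 hs hn
  obtain ⟨l, hmem, hsum, hlen⟩ := S7.upper g (N + 1) ε
  have hlen2 : l.length = S7.cg g n := by
    have : (l.length : ℤ) = (S7.cg g n : ℤ) := by rw [hlen, ← hcanon]
    exact_mod_cast this
  have hle : lg g n ≤ S7.cg g n := by
    rw [← hlen2]
    exact Nat.sInf_le ⟨l, hmem, by rw [hsum, ← hn], rfl⟩
  have hge' : S7.cg g n ≤ lg g n := by
    apply le_csInf
    · exact ⟨l.length, l, hmem, by rw [hsum, ← hn], rfl⟩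
    · rintro b ⟨l', hmem', hsum', hlen'⟩
      have := S7.list_lb k g hk hgk l' hmem'
      rw [hsum'] at this
      omega
  have : lg g n = S7.cg g n := le_antisymm hle hge'
  rw [this, hcanon, habs]
end

section
/- Let g be an odd integer with g ≥ 3, and let ℓ_g(n) be the word length of n with respect to A_g = {0} ∪ {±gⁱ : i ≥ 0} in the additive group ℤ. If n = Σ_{i≥0} εᵢ gⁱ is the balanced representation with εᵢ ∈ {0, ±1, ..., ±(g−1)/2} and finitely many εᵢ nonzero, then ℓ_g(n) = Σ_{i≥0} |εᵢ|. -/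
lemma q_lt {g n q r : ℤ} (hg : 3 ≤ g) (hn : n ≠ 0) (hqr : n = g * q + r)
    (hr : |r| ≤ g / 2) : q.natAbs < n.natAbs := by
  have habs : |q| < |n| → q.natAbs < n.natAbs := by
    intro h
    rw [← Int.natCast_natAbs, ← Int.natCast_natAbs] at h
    exact_mod_cast h
  apply habs
  by_contra hcon
  push_neg at hcon
  have h1 : 1 ≤ |n| := Int.one_le_abs hn
  have h2 : g * |q| ≤ |n| + g / 2 := by
    calc g * |q| = |g * q| := by
          rw [abs_mul, abs_of_nonneg (by omega : (0:ℤ) ≤ g)]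
      _ = |n + (-r)| := by rw [hqr]; ring_nf
      _ ≤ |n| + |(-r)| := abs_add_le _ _
      _ ≤ |n| + g / 2 := by rw [abs_neg]; omega
  have h3 : 2 * (g / 2) ≤ g := by omega
  have h4 : g * |n| ≤ g * |q| := mul_le_mul_of_nonneg_left hcon (by omega)
  nlinarith

def Fb (g : ℤ) (n : ℤ) : ℕ :=
  if h : n = 0 ∨ g < 3 then 0
  else (n.bmod g.toNat).natAbs + Fb g ((n - n.bmod g.toNat) / g)
  termination_by n.natAbs
  decreasing_by
    push_neg at h
    obtain ⟨hn, hg⟩ := h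
    have hm : 0 < g.toNat := by omega
    have hd : g ∣ n - n.bmod g.toNat := by
      have h5 := @Int.dvd_bmod_sub_self n g.toNat
      rw [show ((g.toNat : ℤ)) = g by omega] at h5
      have := dvd_neg.mpr h5
      rwa [neg_sub] at this
    refine q_lt (r := n.bmod g.toNat) hg hn ?_ ?_
    · rw [Int.mul_ediv_cancel' hd]; ring
    · have h1 := Int.bmod_le (x := n) hm
      have h2 := Int.le_bmod (x := n) hm
      rw [show ((g.toNat : ℤ)) = g by omega] at h1 h2
      rw [abs_le]; omega

section
variable {g : ℤ}

lemma bmod_char (hg : 3 ≤ g) (hgo : Odd g) {n q r : ℤ}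
    (hr : |r| ≤ (g - 1) / 2) (hn : n = g * q + r) :
    n.bmod g.toNat = r ∧ (n - n.bmod g.toNat) / g = q := by
  have hm : 0 < g.toNat := by omega
  have hcast : ((g.toNat : ℤ)) = g := by omega
  obtain ⟨k, hk⟩ := hgo
  have hg2 : g / 2 = (g - 1) / 2 := by omega
  have h1 := Int.bmod_le (x := n) hm
  have h2 := Int.le_bmod (x := n) hm
  rw [hcast] at h1 h2
  have hd : g ∣ n.bmod g.toNat - n := by
    have h5 := @Int.dvd_bmod_sub_self n g.toNat
    rwa [hcast] at h5
  have hdr : g ∣ n.bmod g.toNat - r := by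
    have : n.bmod g.toNat - r = (n.bmod g.toNat - n) + g * q := by
      rw [hn]; ring
    rw [this]
    exact dvd_add hd (Dvd.intro q rfl)
  have heq : n.bmod g.toNat = r := by
    have hz : n.bmod g.toNat - r = 0 := by
      refine Int.eq_zero_of_dvd_of_natAbs_lt_natAbs hdr ?_
      have : |n.bmod g.toNat - r| < |g| := by
        rw [abs_of_nonneg (by omega : (0:ℤ) ≤ g)]
        rw [abs_le] at hr
        have := abs_sub_abs_le_abs_sub (n.bmod g.toNat) r
        rw [abs_lt]; omega
      rw [← Int.natCast_natAbs, ← Int.natCast_natAbs] at this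
      exact_mod_cast this
    omega
  refine ⟨heq, ?_⟩
  rw [heq, hn]
  rw [show g * q + r - r = g * q by ring]
  exact Int.mul_ediv_cancel_left q (by omega)

end
section
variable {g : ℤ}

lemma Fb_zero (g : ℤ) : Fb g 0 = 0 := by rw [Fb]; simp

lemma Fb_eq_of (hg : 3 ≤ g) (hgo : Odd g) {n q r : ℤ}
    (hr : |r| ≤ (g - 1) / 2) (hn : n = g * q + r) :
    Fb g n = r.natAbs + Fb g q := by
  obtain ⟨h1, h2⟩ := bmod_char hg hgo hr hn
  by_cases hn0 : n = 0
  · subst hn0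
    have hb : (0:ℤ).bmod g.toNat = 0 := by simp
    rw [hb] at h1 h2
    simp at h2
    simp [← h2, ← h1, Fb_zero]
  · rw [Fb, dif_neg (by push_neg; exact ⟨hn0, by omega⟩), h2, h1]

end
section
variable {g : ℤ}

lemma Fb_decomp (hg : 3 ≤ g) (hgo : Odd g) (n : ℤ) :
    ∃ q r : ℤ, n = g * q + r ∧ |r| ≤ (g - 1) / 2 ∧
      Fb g n = r.natAbs + Fb g q ∧ (n ≠ 0 → q.natAbs < n.natAbs) := by
  have hm : 0 < g.toNat := by omega
  have hcast : ((g.toNat : ℤ)) = g := by omega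
  obtain ⟨k, hk⟩ := id hgo
  set r := n.bmod g.toNat with hrdef
  have h1 := Int.bmod_le (x := n) hm
  have h2 := Int.le_bmod (x := n) hm
  rw [hcast] at h1 h2
  have hr : |r| ≤ (g - 1) / 2 := by rw [abs_le]; omega
  have hd : g ∣ n - r := by
    have h5 := @Int.dvd_bmod_sub_self n g.toNat
    rw [hcast] at h5
    have := dvd_neg.mpr h5
    rwa [neg_sub] at this
  have hqr : n = g * ((n - r) / g) + r := by rw [Int.mul_ediv_cancel' hd]; ring
  refine ⟨(n - r) / g, r, hqr, hr, Fb_eq_of hg hgo hr hqr, fun hn =>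
    q_lt hg hn hqr (le_trans hr (by omega))⟩

lemma Fb_neg (hg : 3 ≤ g) (hgo : Odd g) (n : ℤ) : Fb g (-n) = Fb g n := by
  suffices H : ∀ m (n : ℤ), n.natAbs = m → Fb g (-n) = Fb g n from H _ n rfl
  intro m
  induction m using Nat.strong_induction_on with
  | _ m IH =>
    intro n hN
    subst hN
    obtain ⟨q, r, hqr, hr, hF, hlt⟩ := Fb_decomp hg hgo n
    by_cases h0 : n = 0
    · simp [h0]
    · have hneg : -n = g * (-q) + (-r) := by rw [hqr]; ring
      rw [Fb_eq_of hg hgo (by rwa [abs_neg]) hneg, hF, Int.natAbs_neg]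
      exact congrArg _ (IH q.natAbs (hlt h0) q rfl)

end
section
variable {g : ℤ}

lemma Fb_succ (hg : 3 ≤ g) (hgo : Odd g) (n : ℤ) : Fb g (n + 1) ≤ Fb g n + 1 := by
  suffices H : ∀ m (n : ℤ), n.natAbs = m → Fb g (n + 1) ≤ Fb g n + 1 from H _ n rfl
  intro m
  induction m using Nat.strong_induction_on with
  | _ m IH =>
    intro n hN
    subst hN
    obtain ⟨k, hk⟩ := id hgo
    have hk1 : 1 ≤ k := by omega
    obtain ⟨q, r, hqr, hr, hF, hlt⟩ := Fb_decomp hg hgo n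
    rw [abs_le] at hr
    by_cases h0 : n = 0
    · subst h0
      rw [Fb_zero, zero_add]
      have h2 : (1:ℤ) = g * 0 + 1 := by ring
      rw [Fb_eq_of hg hgo (by rw [abs_one]; omega) h2, Fb_zero]
      simp
    · by_cases hcase : r = (g - 1) / 2
      · have hrk : r = k := by omega
        have h2 : n + 1 = g * (q + 1) + (-k) := by rw [hqr, hrk, hk]; ring
        have hb : |(-k : ℤ)| ≤ (g - 1) / 2 := by rw [abs_neg, abs_of_nonneg (by omega)]; omega
        rw [Fb_eq_of hg hgo hb h2, hF]
        have h3 := IH q.natAbs (hlt h0) q rfl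
        have h4 : (-k : ℤ).natAbs = r.natAbs := by omega
        omega
      · have h2 : n + 1 = g * q + (r + 1) := by rw [hqr]; ring
        have hb : |r + 1| ≤ (g - 1) / 2 := by rw [abs_le]; omega
        rw [Fb_eq_of hg hgo hb h2, hF]
        have : (r + 1).natAbs ≤ r.natAbs + 1 := by omega
        omega

lemma Fb_pred (hg : 3 ≤ g) (hgo : Odd g) (n : ℤ) : Fb g (n - 1) ≤ Fb g n + 1 := by
  have h1 : n - 1 = -((-n) + 1) := by ring
  rw [h1, Fb_neg hg hgo]
  calc Fb g (-n + 1) ≤ Fb g (-n) + 1 := Fb_succ hg hgo _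
    _ = Fb g n + 1 := by rw [Fb_neg hg hgo]

lemma Fb_add_pow (hg : 3 ≤ g) (hgo : Odd g) (i : ℕ) :
    ∀ (n δ : ℤ), (δ = 1 ∨ δ = -1) → Fb g (n + δ * g ^ i) ≤ Fb g n + 1 := by
  induction i with
  | zero =>
    intro n δ hδ
    rcases hδ with rfl | rfl
    · simpa using Fb_succ hg hgo n
    · have : n + -1 * g ^ 0 = n - 1 := by ring
      rw [this]
      exact Fb_pred hg hgo n
  | succ i IH =>
    intro n δ hδ
    obtain ⟨q, r, hqr, hr, hF, _⟩ := Fb_decomp hg hgo n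
    have h2 : n + δ * g ^ (i + 1) = g * (q + δ * g ^ i) + r := by rw [hqr]; ring
    rw [Fb_eq_of hg hgo hr h2, hF]
    have := IH q δ hδ
    omega

end
section
variable {g : ℤ}

lemma Fb_le_length (hg : 3 ≤ g) (hgo : Odd g) :
    ∀ l : List ℤ, (∀ a ∈ l, a ∈ Ag g) → Fb g l.sum ≤ l.length := by
  intro l
  induction l with
  | nil => intro _; simp [Fb_zero]
  | cons a t IH =>
    intro h
    have ha := h a (List.mem_cons_self (a := a) (l := t))
    have ht : Fb g t.sum ≤ t.length := IH (fun b hb => h b (List.mem_cons_of_mem a hb))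
    rw [List.sum_cons, List.length_cons]
    rcases ha with ha | ⟨i, ha | ha⟩
    · rw [Set.mem_singleton_iff] at ha
      subst ha
      rw [zero_add]
      omega
    · have : a + t.sum = t.sum + 1 * g ^ i := by rw [ha]; ring
      rw [this]
      have := Fb_add_pow hg hgo i t.sum 1 (Or.inl rfl)
      omega
    · have : a + t.sum = t.sum + (-1) * g ^ i := by rw [ha]; ring
      rw [this]
      have := Fb_add_pow hg hgo i t.sum (-1) (Or.inr rfl)
      omega

lemma Fb_digits (hg : 3 ≤ g) (hgo : Odd g) :
    ∀ (N : ℕ) (ε : ℕ → ℤ), (∀ i, |ε i| ≤ (g - 1) / 2) →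
      Fb g (∑ i ∈ Finset.range N, ε i * g ^ i) = ∑ i ∈ Finset.range N, (ε i).natAbs := by
  intro N
  induction N with
  | zero => intro ε _; simp [Fb_zero]
  | succ N IH =>
    intro ε hε
    rw [Finset.sum_range_succ' (fun i => ε i * g ^ i) N,
        Finset.sum_range_succ' (fun i => (ε i).natAbs) N]
    have h2 : (∑ i ∈ Finset.range N, ε (i + 1) * g ^ (i + 1)) + ε 0 * g ^ 0
        = g * (∑ i ∈ Finset.range N, ε (i + 1) * g ^ i) + ε 0 := by
      rw [Finset.mul_sum]
      simp [pow_succ]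
      ring_nf
      congr 1
      funext i
      ring
    rw [h2, Fb_eq_of hg hgo (hε 0) rfl, IH (fun i => ε (i + 1)) (fun i => hε (i + 1))]
    omega

lemma exists_list (hg : 3 ≤ g) :
    ∀ (N : ℕ) (ε : ℕ → ℤ), ∃ l : List ℤ, (∀ a ∈ l, a ∈ Ag g) ∧
      l.sum = ∑ i ∈ Finset.range N, ε i * g ^ i ∧
      l.length = ∑ i ∈ Finset.range N, (ε i).natAbs := by
  intro N
  induction N with
  | zero => intro ε; exact ⟨[], by simp, by simp, by simp⟩
  | succ N IH =>
    intro ε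
    obtain ⟨l, hl1, hl2, hl3⟩ := IH ε
    refine ⟨l ++ List.replicate (ε N).natAbs (if 0 ≤ ε N then g ^ N else -g ^ N), ?_, ?_, ?_⟩
    · intro a ha
      rcases List.mem_append.mp ha with h | h
      · exact hl1 a h
      · have := List.eq_of_mem_replicate h
        subst this
        right
        exact ⟨N, by split <;> simp⟩
    · rw [List.sum_append, List.sum_replicate, hl2, Finset.sum_range_succ]
      congr 1
      rw [nsmul_eq_mul]
      split
      · rw [Int.natCast_natAbs, abs_of_nonneg (by assumption)]
      · rw [Int.natCast_natAbs, abs_of_neg (by omega)]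
        ring
    · rw [List.length_append, List.length_replicate, hl3, Finset.sum_range_succ]

end
theorem stmt10 (g : ℤ) (hg : 3 ≤ g) (hgo : Odd g) (n : ℤ) (ε : ℕ → ℤ)
    (h1 : ∀ i, |ε i| ≤ (g - 1) / 2)
    (h2 : Set.Finite {i | ε i ≠ 0})
    (h4 : n = ∑ᶠ i, ε i * g ^ i) :
    (lg g n : ℤ) = ∑ᶠ i, |ε i| := by
  obtain ⟨N, hN⟩ := Finset.exists_nat_subset_range h2.toFinset
  have hsupp : Function.support ε ⊆ (Finset.range N : Set ℕ) := by
    intro i hi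
    exact_mod_cast hN (h2.mem_toFinset.mpr hi)
  have hn : n = ∑ i ∈ Finset.range N, ε i * g ^ i := by
    rw [h4]
    exact finsum_eq_sum_of_support_subset _ (fun i hi => hsupp (by
      intro h0
      simp [Function.mem_support, h0] at hi))
  have habs : ∑ᶠ i, |ε i| = ∑ i ∈ Finset.range N, |ε i| := by
    exact finsum_eq_sum_of_support_subset _ (fun i hi => hsupp (by
      intro h0
      simp [Function.mem_support, h0] at hi))
  set D : ℕ := ∑ i ∈ Finset.range N, (ε i).natAbs with hD
  have hmem : D ∈ {h | ∃ l : List ℤ, (∀ a ∈ l, a ∈ Ag g) ∧ l.sum = n ∧ l.length = h} := by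
    obtain ⟨l, hl1, hl2, hl3⟩ := exists_list hg N ε
    exact ⟨l, hl1, by rw [hl2, ← hn], hl3⟩
  have hlb : ∀ h ∈ {h | ∃ l : List ℤ, (∀ a ∈ l, a ∈ Ag g) ∧ l.sum = n ∧ l.length = h}, D ≤ h := by
    rintro h ⟨l, hl1, hl2, hl3⟩
    rw [← hl3, hD, ← Fb_digits hg hgo N ε h1, ← hn, ← hl2]
    exact Fb_le_length hg hgo l hl1
  have : lg g n = D := le_antisymm (Nat.sInf_le hmem) (le_csInf ⟨D, hmem⟩ hlb)
  rw [this, habs, hD]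
  push_cast [Int.natCast_natAbs]
  rfl
end

section
/- Every integer n has a unique representation n = Σ_{i≥0} εᵢ 3ⁱ with εᵢ ∈ {0, ±1} and finitely many εᵢ nonzero, and the word length ℓ₃(n) with respect to A₃ = {0} ∪ {±3ⁱ : i ≥ 0} equals Σ_{i≥0} |εᵢ|. -/
def bd (n : ℤ) : ℤ := if n % 3 = 0 then 0 else if n % 3 = 1 then 1 else -1

def fq (n : ℤ) : ℤ := (n - bd n) / 3

lemma bd_abs (n : ℤ) : |bd n| ≤ 1 := by
  unfold bd; split <;> [skip; split] <;> simp

lemma bd_zero : bd 0 = 0 := by simp [bd]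

lemma bd_dvd (n : ℤ) : 3 ∣ n - bd n := by
  unfold bd; split <;> [skip; split] <;> omega

lemma fq_spec (n : ℤ) : n = bd n + 3 * fq n := by
  have h := Int.ediv_mul_cancel (bd_dvd n)
  unfold fq; omega

lemma fq_zero : fq 0 = 0 := by simp [fq, bd]

lemma fq_lt (n : ℤ) (h : n ≠ 0) : (fq n).natAbs < n.natAbs := by
  have h1 := fq_spec n
  have h2 := bd_abs n
  rw [abs_le] at h2
  omega

def S (n : ℤ) : ℕ :=
  if h : n = 0 then 0 else (bd n).natAbs + S (fq n)
termination_by n.natAbs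
decreasing_by exact fq_lt n h

lemma S_zero : S 0 = 0 := by rw [S]; simp

lemma S_of_ne (n : ℤ) (h : n ≠ 0) : S n = (bd n).natAbs + S (fq n) := by
  rw [S]; simp [h]

def eps (n : ℤ) (i : ℕ) : ℤ := bd (fq^[i] n)

lemma eps_zero (n : ℤ) : eps n 0 = bd n := rfl

lemma eps_succ (n : ℤ) (i : ℕ) : eps n (i + 1) = eps (fq n) i := by
  simp [eps, Function.iterate_succ_apply]

lemma eps_abs (n : ℤ) (i : ℕ) : |eps n i| ≤ 1 := bd_abs _

lemma iter_fq_zero : ∀ k : ℕ, ∀ n : ℤ, n.natAbs ≤ k → fq^[k] n = 0 := by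
  intro k
  induction k with
  | zero => intro n h; simpa using (by omega : n.natAbs = 0) |> Int.natAbs_eq_zero.mp
  | succ k ih =>
    intro n h
    rw [Function.iterate_succ_apply]
    rcases eq_or_ne n 0 with rfl | hn
    · rw [fq_zero]; exact ih 0 (by simp)
    · exact ih _ (by have := fq_lt n hn; omega)

lemma eps_eventually_zero (n : ℤ) (i : ℕ) (h : n.natAbs ≤ i) : eps n i = 0 := by
  rw [eps, iter_fq_zero i n h, bd_zero]

lemma sum_eps : ∀ N : ℕ, ∀ n : ℤ, fq^[N] n = 0 →
    n = ∑ i ∈ Finset.range N, eps n i * 3 ^ i := by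
  intro N
  induction N with
  | zero => intro n h; simpa using h
  | succ N ih =>
    intro n h
    rw [Function.iterate_succ_apply] at h
    have hm := ih (fq n) h
    rw [Finset.sum_range_succ']
    have : ∀ i, eps n (i + 1) * 3 ^ (i + 1) = 3 * (eps (fq n) i * 3 ^ i) := by
      intro i; rw [eps_succ]; ring
    simp only [this, ← Finset.mul_sum, ← hm, eps_zero, pow_zero]
    have := fq_spec n
    omega

lemma S_eq_sum : ∀ N : ℕ, ∀ n : ℤ, fq^[N] n = 0 →
    S n = ∑ i ∈ Finset.range N, (eps n i).natAbs := by
  intro N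
  induction N with
  | zero => intro n h; simp at h; simp [h, S_zero]
  | succ N ih =>
    intro n h
    rw [Function.iterate_succ_apply] at h
    have hm := ih (fq n) h
    rcases eq_or_ne n 0 with rfl | hn
    · rw [S_zero]
      have : ∀ i ∈ Finset.range (N + 1), (eps 0 i).natAbs = 0 := by
        intro i _; rw [eps_eventually_zero 0 i (by simp)]; rfl
      rw [Finset.sum_congr rfl this]; simp
    · rw [S_of_ne n hn, Finset.sum_range_succ']
      simp only [eps_succ, eps_zero, ← hm]
      omega

lemma uniq : ∀ N : ℕ, ∀ e e' : ℕ → ℤ, (∀ i, |e i| ≤ 1) → (∀ i, |e' i| ≤ 1) →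
    (∑ i ∈ Finset.range N, e i * 3 ^ i = ∑ i ∈ Finset.range N, e' i * 3 ^ i) →
    ∀ i < N, e i = e' i := by
  intro N
  induction N with
  | zero => intro _ _ _ _ _ i hi; omega
  | succ N ih =>
    intro e e' he he' hsum i hi
    rw [Finset.sum_range_succ', Finset.sum_range_succ'] at hsum
    have h3 : ∀ f : ℕ → ℤ, ∑ i ∈ Finset.range N, f (i + 1) * 3 ^ (i + 1)
        = 3 * ∑ i ∈ Finset.range N, f (i + 1) * 3 ^ i := by
      intro f
      rw [Finset.mul_sum]
      exact Finset.sum_congr rfl fun i _ => by ring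
    rw [h3 e, h3 e'] at hsum
    have h0 := he 0
    have h0' := he' 0
    rw [abs_le] at h0 h0'
    have key : e 0 = e' 0 ∧ ∑ i ∈ Finset.range N, e (i + 1) * 3 ^ i
        = ∑ i ∈ Finset.range N, e' (i + 1) * 3 ^ i := by
      constructor <;> [omega; omega]
    rcases i with _ | j
    · exact key.1
    · exact ih (fun i => e (i + 1)) (fun i => e' (i + 1)) (fun i => he _) (fun i => he' _)
        key.2 j (by omega)

lemma bd_add_mul (n k : ℤ) : bd (n + 3 * k) = bd n := by
  unfold bd
  have : (n + 3 * k) % 3 = n % 3 := by omega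
  rw [this]

lemma fq_add_mul (n k : ℤ) : fq (n + 3 * k) = fq n + k := by
  have h1 := fq_spec n
  have h2 := fq_spec (n + 3 * k)
  rw [bd_add_mul] at h2
  omega

lemma bd_neg (n : ℤ) : bd (-n) = -bd n := by
  have h : n % 3 = 0 ∨ n % 3 = 1 ∨ n % 3 = 2 := by omega
  rcases h with h | h | h
  · have h' : (-n) % 3 = 0 := by omega
    simp [bd, h, h']
  · have h' : (-n) % 3 = 2 := by omega
    simp [bd, h, h']
  · have h' : (-n) % 3 = 1 := by omega
    simp [bd, h, h']

lemma fq_neg (n : ℤ) : fq (-n) = -fq n := by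
  have h1 := fq_spec n
  have h2 := fq_spec (-n)
  rw [bd_neg] at h2
  omega

lemma S_neg (n : ℤ) : S (-n) = S n := by
  have key : ∀ k : ℕ, ∀ n : ℤ, n.natAbs ≤ k → S (-n) = S n := by
    intro k
    induction k with
    | zero => intro n h; have : n = 0 := by omega
              simp [this]
    | succ k ih =>
      intro n h
      rcases eq_or_ne n 0 with rfl | hn
      · simp
      · rw [S_of_ne n hn, S_of_ne (-n) (by omega), bd_neg, fq_neg, Int.natAbs_neg,
          ih (fq n) (by have := fq_lt n hn; omega)]
  exact key n.natAbs n le_rfl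

lemma S_add_one (n : ℤ) : S (n + 1) ≤ S n + 1 := by
  have key : ∀ k : ℕ, ∀ n : ℤ, n.natAbs ≤ k → S (n + 1) ≤ S n + 1 := by
    intro k
    induction k with
    | zero => intro n h
              have : n = 0 := by omega
              subst this
              rw [zero_add, S_of_ne 1 one_ne_zero]
              have : fq 1 = 0 := by
                have := fq_spec 1
                have := bd_abs 1
                rw [abs_le] at this
                omega
              simp [this, S_zero, bd]
    | succ k ih =>
      intro n h
      rcases eq_or_ne n 0 with rfl | hn
      · rw [zero_add, S_of_ne 1 one_ne_zero]
        have h1 : fq 1 = 0 := by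
          have := fq_spec 1; have := bd_abs 1; rw [abs_le] at this; omega
        simp [h1, S_zero, bd]
      have hs := fq_spec n
      have hmod : n % 3 = 0 ∨ n % 3 = 1 ∨ n % 3 = 2 := by omega
      have hfq := fq_lt n hn
      rcases hmod with hm | hm | hm
      · -- bd n = 0, n+1 ≠ 0, bd (n+1) = 1, fq (n+1) = fq n
        have hb : bd n = 0 := by simp [bd, hm]
        have hb' : bd (n + 1) = 1 := by
          have : (n + 1) % 3 = 1 := by omega
          simp [bd, this]
        have hne : n + 1 ≠ 0 := by omega
        have hq : fq (n + 1) = fq n := by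
          have := fq_spec (n + 1); rw [hb'] at this; omega
        rw [S_of_ne _ hne, hb', hq, S_of_ne n hn, hb]
        simp; omega
      · -- bd n = 1, bd (n+1) = -1, fq (n+1) = fq n + 1
        have hb : bd n = 1 := by simp [bd, hm]
        have hb' : bd (n + 1) = -1 := by
          have h2 : (n + 1) % 3 = 2 := by omega
          simp [bd, h2]
        have hne : n + 1 ≠ 0 := by omega
        have hq : fq (n + 1) = fq n + 1 := by
          have := fq_spec (n + 1); rw [hb'] at this; omega
        rw [S_of_ne _ hne, hb', hq, S_of_ne n hn, hb]
        have := ih (fq n) (by omega)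
        simpa using by omega
      · -- bd n = -1, bd (n+1) = 0, fq (n+1) = fq n
        have hb : bd n = -1 := by simp [bd, hm]
        rcases eq_or_ne (n + 1) 0 with h0 | hne
        · rw [h0, S_zero]; omega
        · have hb' : bd (n + 1) = 0 := by
            have : (n + 1) % 3 = 0 := by omega
            simp [bd, this]
          have hq : fq (n + 1) = fq n := by
            have := fq_spec (n + 1); rw [hb'] at this; omega
          rw [S_of_ne _ hne, hb', hq, S_of_ne n hn, hb]
          simp; omega
  exact key n.natAbs n le_rfl

lemma S_add_pow : ∀ i : ℕ, ∀ n : ℤ, S (n + 3 ^ i) ≤ S n + 1 := by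
  intro i
  induction i with
  | zero => intro n; simpa using S_add_one n
  | succ i ih =>
    intro n
    have hpow : (3 : ℤ) ^ (i + 1) = 3 * 3 ^ i := by ring
    have hb : bd (n + 3 ^ (i + 1)) = bd n := by rw [hpow, bd_add_mul]
    have hq : fq (n + 3 ^ (i + 1)) = fq n + 3 ^ i := by rw [hpow, fq_add_mul]
    rcases eq_or_ne (n + 3 ^ (i + 1)) 0 with h0 | h0
    · rw [h0, S_zero]; omega
    rw [S_of_ne _ h0, hb, hq]
    rcases eq_or_ne n 0 with rfl | hn
    · rw [bd_zero, fq_zero, S_zero]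
      have := ih 0
      rw [S_zero] at this
      simpa using this
    · rw [S_of_ne n hn]
      have := ih (fq n)
      omega

lemma S_sub_pow (i : ℕ) (n : ℤ) : S (n - 3 ^ i) ≤ S n + 1 := by
  have h1 : n - 3 ^ i = -(-n + 3 ^ i) := by ring
  rw [h1, S_neg]
  calc S (-n + 3 ^ i) ≤ S (-n) + 1 := S_add_pow i (-n)
    _ = S n + 1 := by rw [S_neg]

lemma S_list : ∀ l : List ℤ, (∀ a ∈ l, a ∈ Ag 3) → S l.sum ≤ l.length := by
  intro l
  induction l with
  | nil => intro _; simp [S_zero]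
  | cons a l ih =>
    intro h
    have ha := h a (List.mem_cons_self (a := a) (l := l))
    have hl := ih fun x hx => h x (List.mem_cons_of_mem a hx)
    rw [List.sum_cons, List.length_cons]
    rcases ha with rfl | ⟨i, rfl | rfl⟩
    · simpa using Nat.le_succ_of_le hl
    · have : (3 : ℤ) ^ i + l.sum = l.sum + 3 ^ i := by ring
      rw [this]
      have := S_add_pow i l.sum
      omega
    · have : -(3 : ℤ) ^ i + l.sum = l.sum - 3 ^ i := by ring
      rw [this]
      have := S_sub_pow i l.sum
      omega

lemma eps_val (n : ℤ) (i : ℕ) (h : eps n i ≠ 0) : eps n i = 1 ∨ eps n i = -1 := by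
  have := eps_abs n i
  rw [abs_le] at this
  omega

lemma lg_eq_S (n : ℤ) : lg 3 n = S n := by
  have hmem : S n ∈ {h | ∃ l : List ℤ, (∀ a ∈ l, a ∈ Ag 3) ∧ l.sum = n ∧ l.length = h} := by
    set N := n.natAbs with hNdef
    have hN : fq^[N] n = 0 := iter_fq_zero N n le_rfl
    set s := (Finset.range N).filter (fun i => eps n i ≠ 0) with hs
    refine ⟨s.toList.map (fun i => eps n i * 3 ^ i), ?_, ?_, ?_⟩
    · intro a ha
      simp only [List.mem_map, Finset.mem_toList] at ha
      obtain ⟨i, hi, rfl⟩ := ha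
      have hne : eps n i ≠ 0 := by
        simp only [hs, Finset.mem_filter] at hi
        exact hi.2
      rcases eps_val n i hne with h | h <;> rw [h]
      · exact Or.inr ⟨i, Or.inl (by ring)⟩
      · exact Or.inr ⟨i, Or.inr (by ring)⟩
    · rw [Finset.sum_map_toList]
      rw [Finset.sum_filter_of_ne (by intro i _ h hc; rw [hc] at h; simp at h)]
      exact (sum_eps N n hN).symm
    · rw [List.length_map, Finset.length_toList]
      have h1 : S n = ∑ i ∈ s, (eps n i).natAbs := by
        rw [S_eq_sum N n hN]
        rw [Finset.sum_filter_of_ne (by intro i _ h hc; rw [hc] at h; simp at h)]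
      rw [h1, Finset.card_eq_sum_ones s]
      refine Finset.sum_congr rfl fun i hi => ?_
      have hne : eps n i ≠ 0 := by
        simp only [hs, Finset.mem_filter] at hi
        exact hi.2
      rcases eps_val n i hne with h | h <;> rw [h] <;> rfl
  have hub : lg 3 n ≤ S n := Nat.sInf_le hmem
  have hlbmem := Nat.sInf_mem (⟨S n, hmem⟩ :
    Set.Nonempty {h | ∃ l : List ℤ, (∀ a ∈ l, a ∈ Ag 3) ∧ l.sum = n ∧ l.length = h})
  obtain ⟨l, hl, hsum, hlen⟩ := hlbmem
  have hlb : S n ≤ lg 3 n := by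
    have := S_list l hl
    rw [hsum] at this
    rw [hlen] at this
    exact this
  exact le_antisymm hub hlb

lemma finsum_eq_range (f : ℕ → ℤ) (N : ℕ) (h : ∀ i, f i ≠ 0 → i < N) :
    ∑ᶠ i, f i = ∑ i ∈ Finset.range N, f i := by
  apply finsum_eq_sum_of_support_subset
  intro i hi
  simp only [Finset.coe_range, Set.mem_Iio]
  exact h i hi

lemma rep_eq (n : ℤ) (ε : ℕ → ℤ) (h1 : ∀ i, |ε i| ≤ 1)
    (h2 : Set.Finite {i | ε i ≠ 0}) (h3 : n = ∑ᶠ i, ε i * 3 ^ i) : ε = eps n := by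
  obtain ⟨N0, hN0⟩ : ∃ N0, ∀ i, ε i ≠ 0 → i < N0 := by
    obtain ⟨M, hM⟩ := h2.bddAbove
    exact ⟨M + 1, fun i hi => Nat.lt_succ_of_le (hM hi)⟩
  set N := max N0 n.natAbs with hNdef
  have hN : ∀ i, ε i ≠ 0 → i < N := fun i hi => lt_of_lt_of_le (hN0 i hi) (le_max_left _ _)
  have heps : ∀ i, eps n i ≠ 0 → i < N := by
    intro i hi
    by_contra hc
    exact hi (eps_eventually_zero n i (le_trans (le_max_right N0 _) (not_lt.mp hc)))
  have hsum1 : n = ∑ i ∈ Finset.range N, ε i * 3 ^ i := by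
    rw [h3, finsum_eq_range _ N (fun i hi => hN i (by intro hc; rw [hc] at hi; simp at hi))]
  have hsum2 : n = ∑ i ∈ Finset.range N, eps n i * 3 ^ i :=
    sum_eps N n (iter_fq_zero N n (le_max_right _ _))
  have key := uniq N ε (eps n) h1 (eps_abs n) (hsum1 ▸ hsum2 ▸ rfl)
  funext i
  by_cases hi : i < N
  · exact key i hi
  · rw [not_lt] at hi
    have e1 : ε i = 0 := by by_contra hc; exact absurd (hN i hc) (by omega)
    have e2 : eps n i = 0 := by by_contra hc; exact absurd (heps i hc) (by omega)
    rw [e1, e2]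

theorem stmt11 (n : ℤ) :
    (∃! ε : ℕ → ℤ,
      (∀ i, |ε i| ≤ 1) ∧
      (Set.Finite {i | ε i ≠ 0}) ∧
      n = ∑ᶠ i, ε i * 3 ^ i) ∧
    (∀ ε : ℕ → ℤ,
      (∀ i, |ε i| ≤ 1) →
      (Set.Finite {i | ε i ≠ 0}) →
      n = ∑ᶠ i, ε i * 3 ^ i →
      (lg 3 n : ℤ) = ∑ᶠ i, |ε i|) := by
  have hfin : {i | eps n i ≠ 0} ⊆ Set.Iio n.natAbs := by
    intro i hi
    simp only [Set.mem_Iio]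
    by_contra hc
    exact hi (eps_eventually_zero n i (not_lt.mp hc))
  have hsum : n = ∑ᶠ i, eps n i * 3 ^ i := by
    rw [finsum_eq_range _ n.natAbs (fun i hi => by
      by_contra hc
      rw [eps_eventually_zero n i (not_lt.mp hc)] at hi
      exact hi (zero_mul _))]
    exact sum_eps _ n (iter_fq_zero _ n le_rfl)
  constructor
  · exact ⟨eps n, ⟨eps_abs n, (Set.finite_Iio _).subset hfin, hsum⟩,
      fun ε ⟨h1, h2, h3⟩ => rep_eq n ε h1 h2 h3⟩
  · intro ε h1 h2 h3
    have hε := rep_eq n ε h1 h2 h3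
    subst hε
    rw [lg_eq_S]
    have habs : ∀ i : ℕ, |eps n i| ≠ 0 → i < n.natAbs := by
      intro i hi
      by_contra hc
      rw [eps_eventually_zero n i (not_lt.mp hc)] at hi
      exact hi rfl
    rw [finsum_eq_range _ n.natAbs habs, S_eq_sum n.natAbs n (iter_fq_zero _ n le_rfl)]
    rw [Nat.cast_sum]
    exact Finset.sum_congr rfl fun i _ => Int.natCast_natAbs _
end

section
/- Let g be even, g ≥ 2, and let (ℤ, d_g) be the metric space on the integers with word metric induced by A_g = {0} ∪ {±gⁱ : i ≥ 0}. For every integer n there exists k ≥ 0 such that ℓ_g(n + gᵏ) = ℓ_g(n) + 1 or ℓ_g(n − gᵏ) = ℓ_g(n) + 1. -/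
lemma zero_mem_Ag (g : ℤ) : (0 : ℤ) ∈ Ag g := Or.inl rfl
lemma pow_mem_Ag (g : ℤ) (i : ℕ) : (g ^ i) ∈ Ag g := Or.inr ⟨i, Or.inl rfl⟩
lemma neg_pow_mem_Ag (g : ℤ) (i : ℕ) : (-g ^ i) ∈ Ag g := Or.inr ⟨i, Or.inr rfl⟩
lemma one_mem_Ag (g : ℤ) : (1 : ℤ) ∈ Ag g := by simpa using pow_mem_Ag g 0
lemma neg_one_mem_Ag (g : ℤ) : (-1 : ℤ) ∈ Ag g := by simpa using neg_pow_mem_Ag g 0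

lemma lg_le (g n : ℤ) (l : List ℤ) (hmem : ∀ a ∈ l, a ∈ Ag g) (hsum : l.sum = n) :
    lg g n ≤ l.length := Nat.sInf_le ⟨l, hmem, hsum, rfl⟩

lemma rep_list (g n : ℤ) :
    ∃ l : List ℤ, (∀ a ∈ l, a ∈ Ag g) ∧ l.sum = n ∧ l.length = n.natAbs := by
  refine ⟨List.replicate n.natAbs (if 0 ≤ n then (1:ℤ) else -1), ?_, ?_, by simp⟩
  · intro a ha
    rw [List.eq_of_mem_replicate ha]
    split
    · exact one_mem_Ag g
    · exact neg_one_mem_Ag g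
  · rw [List.sum_replicate]
    split
    · simp only [nsmul_eq_mul, mul_one]; omega
    · simp only [nsmul_eq_mul, mul_neg_one]; omega

lemma lg_exists (g n : ℤ) :
    ∃ l : List ℤ, (∀ a ∈ l, a ∈ Ag g) ∧ l.sum = n ∧ l.length = lg g n := by
  have hne : {h | ∃ l : List ℤ, (∀ a ∈ l, a ∈ Ag g) ∧ l.sum = n ∧ l.length = h}.Nonempty := by
    obtain ⟨l, h1, h2, h3⟩ := rep_list g n
    exact ⟨n.natAbs, l, h1, h2, h3⟩
  exact Nat.sInf_mem hne

lemma lg_le_natAbs (g n : ℤ) : lg g n ≤ n.natAbs := by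
  obtain ⟨l, h1, h2, h3⟩ := rep_list g n
  simpa [h3] using lg_le g n l h1 h2

lemma lg_add_le (g m n : ℤ) : lg g (m + n) ≤ lg g m + lg g n := by
  obtain ⟨l1, h1, hs1, hl1⟩ := lg_exists g m
  obtain ⟨l2, h2, hs2, hl2⟩ := lg_exists g n
  have := lg_le g (m + n) (l1 ++ l2)
    (by intro a ha; rcases List.mem_append.1 ha with h | h; exacts [h1 a h, h2 a h])
    (by simp [hs1, hs2])
  simpa [hl1, hl2] using this

lemma sum_map_mul (g : ℤ) (l : List ℤ) : (l.map (g * ·)).sum = g * l.sum := by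
  induction l with
  | nil => simp
  | cons a t ih => simp [ih, mul_add]

lemma lg_gmul_le (g m : ℤ) : lg g (g * m) ≤ lg g m := by
  obtain ⟨l, h1, hs, hl⟩ := lg_exists g m
  have := lg_le g (g * m) (l.map (g * ·)) ?_ ?_
  · simpa [hl] using this
  · intro a ha
    obtain ⟨b, hb, rfl⟩ := List.mem_map.1 ha
    rcases h1 b hb with h0 | ⟨i, hi | hi⟩
    · simp only [Set.mem_singleton_iff] at h0
      subst h0
      simpa using zero_mem_Ag g
    · subst hi
      have : g * g ^ i = g ^ (i + 1) := by ring
      rw [this]; exact pow_mem_Ag g (i + 1)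
    · subst hi
      have : g * -g ^ i = -g ^ (i + 1) := by ring
      rw [this]; exact neg_pow_mem_Ag g (i + 1)
  · rw [sum_map_mul, hs]

lemma Ag_div (g a : ℤ) (ha : a ∈ Ag g) (h1 : a ≠ 1) (h2 : a ≠ -1) :
    ∃ b ∈ Ag g, a = g * b := by
  rcases ha with h0 | ⟨i, hi | hi⟩
  · simp only [Set.mem_singleton_iff] at h0
    exact ⟨0, zero_mem_Ag g, by simp [h0]⟩
  · cases i with
    | zero => simp at hi; exact absurd hi h1
    | succ j => exact ⟨g ^ j, pow_mem_Ag g j, by rw [hi]; ring⟩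
  · cases i with
    | zero => simp at hi; exact absurd hi h2
    | succ j => exact ⟨-g ^ j, neg_pow_mem_Ag g j, by rw [hi]; ring⟩

lemma split_list (g : ℤ) : ∀ l : List ℤ, (∀ a ∈ l, a ∈ Ag g) →
    ∃ (d : ℤ) (l' : List ℤ), (∀ b ∈ l', b ∈ Ag g) ∧ l.sum = d + g * l'.sum ∧
      d.natAbs + l'.length ≤ l.length := by
  intro l
  induction l with
  | nil => intro _; exact ⟨0, [], by simp, by simp, by simp⟩
  | cons a t ih =>
    intro h
    obtain ⟨d, l', hmem, hsum, hlen⟩ := ih (fun b hb => h b (List.mem_cons_of_mem a hb))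
    by_cases ha1 : a = 1
    · refine ⟨d + 1, l', hmem, ?_, ?_⟩
      · rw [List.sum_cons, hsum, ha1]; ring
      · simp only [List.length_cons]; omega
    by_cases ha2 : a = -1
    · refine ⟨d - 1, l', hmem, ?_, ?_⟩
      · rw [List.sum_cons, hsum, ha2]; ring
      · simp only [List.length_cons]; omega
    · obtain ⟨b, hb, rfl⟩ := Ag_div g a (h a (List.mem_cons_self (a := a) (l := t))) ha1 ha2
      refine ⟨d, b :: l', ?_, ?_, ?_⟩
      · intro x hx; rcases List.mem_cons.1 hx with rfl | hx
        exacts [hb, hmem x hx]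
      · rw [List.sum_cons, List.sum_cons, hsum]; ring
      · simp only [List.length_cons]; omega

lemma key (g : ℤ) (hg : 2 ≤ g) :
    ∀ K : ℕ, ∀ n : ℤ, ∀ l : List ℤ, n.natAbs + 1 ≤ K →
      (∀ a ∈ l, a ∈ Ag g) → l.sum = n + g ^ K → lg g n + 1 ≤ l.length := by
  intro K
  induction K using Nat.strong_induction_on with
  | _ K ih =>
    intro n l hK hmem hsum
    by_contra hcon
    push_neg at hcon
    obtain ⟨K0, rfl⟩ : ∃ K0, K = K0 + 1 := ⟨K - 1, by omega⟩
    obtain ⟨d, l', hmem', hsplit, hlen⟩ := split_list g l hmem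
    set s := l'.sum with hs
    set n' := s - g ^ K0 with hn'
    have hds : d + g * s = n + g ^ (K0 + 1) := by rw [← hsplit, hsum]
    have hgn : n = d + g * n' := by rw [hn']; linear_combination -hds
    have hlg : lg g n ≤ d.natAbs + lg g n' := by
      calc lg g n = lg g (d + g * n') := by rw [← hgn]
        _ ≤ lg g d + lg g (g * n') := lg_add_le g d (g * n')
        _ ≤ d.natAbs + lg g n' := add_le_add (lg_le_natAbs g d) (lg_gmul_le g n')
    have hsum' : l'.sum = n' + g ^ K0 := by rw [hn']; ring
    by_cases hA : n'.natAbs + 1 ≤ K0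
    · have := ih K0 (by omega) n' l' hA hmem' hsum'
      omega
    · push_neg at hA
      have h1 : n.natAbs ≤ K0 := by omega
      have h3 : g * n' = n - d := by linear_combination -hgn
      have h4 : g.natAbs * n'.natAbs ≤ n.natAbs + d.natAbs := by
        rw [← Int.natAbs_mul, h3]
        exact Int.natAbs_sub_le n d
      have hgabs : 2 ≤ g.natAbs := by omega
      have h4' : 2 * n'.natAbs ≤ n.natAbs + d.natAbs :=
        le_trans (Nat.mul_le_mul_right _ hgabs) h4
      have h6 : lg g n ≤ n.natAbs := lg_le_natAbs g n
      have h7 : l'.length = 0 := by omega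
      have hl'nil : l' = [] := List.length_eq_zero_iff.mp h7
      have hs0 : s = 0 := by rw [hs, hl'nil]; simp
      have hn'val : n' = -g ^ K0 := by rw [hn', hs0]; ring
      have h8 : n'.natAbs = g.natAbs ^ K0 := by
        rw [hn'val, Int.natAbs_neg, Int.natAbs_pow]
      have h9 : 2 ^ K0 ≤ g.natAbs ^ K0 := Nat.pow_le_pow_left hgabs K0
      have h10 : K0 < 2 ^ K0 := Nat.lt_two_pow_self (n := K0)
      omega

theorem stmt13 (g : ℤ) (hg : 2 ≤ g) (hge : Even g) (n : ℤ) :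
    ∃ k : ℕ, lg g (n + g ^ k) = lg g n + 1 ∨ lg g (n - g ^ k) = lg g n + 1 := by
  refine ⟨n.natAbs + 1, Or.inl ?_⟩
  set K := n.natAbs + 1 with hK
  have hub : lg g (n + g ^ K) ≤ lg g n + 1 := by
    obtain ⟨l, h1, h2, h3⟩ := lg_exists g n
    have := lg_le g (n + g ^ K) (l ++ [g ^ K]) ?_ ?_
    · simpa [h3] using this
    · intro a ha
      rcases List.mem_append.1 ha with h | h
      · exact h1 a h
      · simp only [List.mem_singleton] at h
        subst h; exact pow_mem_Ag g K
    · simp [h2]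
  have hlb : lg g n + 1 ≤ lg g (n + g ^ K) := by
    obtain ⟨l2, m1, m2, m3⟩ := lg_exists g (n + g ^ K)
    have := key g hg K n l2 (le_refl _) m1 m2
    omega
  omega
end

section
/- Let g be even, g ≥ 2. For every nonnegative integer h, the set C = ⋃_{q≥0} {n ∈ ℤ : ℓ_g(n) = (2h+1)q} is an h-net in (ℤ, d_g); that is, ℤ = hA_g + C where hA_g is the h-fold sumset of A_g = {0} ∪ {±gⁱ : i ≥ 0}. -/
open Pointwise

/-- The h-fold sumset hA = {a₁ + ⋯ + a_h : aᵢ ∈ A}. -/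
def foldSum (h : ℕ) (A : Set ℤ) : Set ℤ :=
  {n | ∃ l : List ℤ, (∀ a ∈ l, a ∈ A) ∧ l.length = h ∧ l.sum = n}

namespace StmtAux

lemma zero_mem_Ag (g : ℤ) : (0:ℤ) ∈ Ag g := Or.inl rfl
lemma pow_mem_Ag (g : ℤ) (i : ℕ) : (g^i : ℤ) ∈ Ag g := Or.inr ⟨i, Or.inl rfl⟩
lemma neg_pow_mem_Ag (g : ℤ) (i : ℕ) : (-g^i : ℤ) ∈ Ag g := Or.inr ⟨i, Or.inr rfl⟩
lemma one_mem_Ag (g : ℤ) : (1:ℤ) ∈ Ag g := by simpa using pow_mem_Ag g 0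
lemma neg_mem_Ag {g a : ℤ} (h : a ∈ Ag g) : -a ∈ Ag g := by
  rcases h with h | ⟨i, h | h⟩
  · simp only [Set.mem_singleton_iff] at h
    subst h; simpa using zero_mem_Ag g
  · subst h; exact neg_pow_mem_Ag g i
  · subst h; simpa using pow_mem_Ag g i

lemma lg_le_length (g : ℤ) (l : List ℤ) (hl : ∀ a ∈ l, a ∈ Ag g) :
    lg g l.sum ≤ l.length :=
  Nat.sInf_le ⟨l, hl, rfl, rfl⟩

lemma rep_list (g : ℤ) (n : ℤ) :
    ∃ l : List ℤ, (∀ a ∈ l, a ∈ Ag g) ∧ l.sum = n ∧ l.length = n.natAbs := by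
  refine ⟨List.replicate n.natAbs (if 0 ≤ n then 1 else -1), ?_, ?_, by simp⟩
  · intro a ha
    rw [List.eq_of_mem_replicate ha]
    split
    · exact one_mem_Ag g
    · simpa using neg_mem_Ag (one_mem_Ag g)
  · rw [List.sum_replicate]
    split <;> rename_i hn
    · simp [Int.natAbs_of_nonneg hn]
    · rw [nsmul_eq_mul, mul_neg_one]
      omega

lemma S_nonempty (g : ℤ) (n : ℤ) :
    {h | ∃ l : List ℤ, (∀ a ∈ l, a ∈ Ag g) ∧ l.sum = n ∧ l.length = h}.Nonempty := by
  obtain ⟨l, h1, h2, h3⟩ := rep_list g n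
  exact ⟨n.natAbs, l, h1, h2, h3⟩

lemma sum_map_neg' (l : List ℤ) : (l.map (fun a => -a)).sum = -l.sum := by
  induction l with
  | nil => simp
  | cons a t ih => simp [ih]; ring

lemma sum_map_mul' (g : ℤ) (l : List ℤ) : (l.map (fun a => g * a)).sum = g * l.sum := by
  induction l with
  | nil => simp
  | cons a t ih => simp [ih]; ring

lemma exists_min_list (g : ℤ) (n : ℤ) :
    ∃ l : List ℤ, (∀ a ∈ l, a ∈ Ag g) ∧ l.sum = n ∧ l.length = lg g n :=
  Nat.sInf_mem (S_nonempty g n)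

lemma lg_zero (g : ℤ) : lg g 0 = 0 :=
  Nat.le_zero.mp (by simpa using lg_le_length g [] (by simp))

lemma lg_eq_zero_iff (g n : ℤ) : lg g n = 0 ↔ n = 0 := by
  constructor
  · intro h
    obtain ⟨l, _, hsum, hlen⟩ := exists_min_list g n
    rw [h, List.length_eq_zero_iff] at hlen
    subst hlen; simpa using hsum.symm
  · rintro rfl; exact lg_zero g

lemma lg_add_le (g x y : ℤ) : lg g (x + y) ≤ lg g x + lg g y := by
  obtain ⟨l1, h1, hs1, hl1⟩ := exists_min_list g x
  obtain ⟨l2, h2, hs2, hl2⟩ := exists_min_list g y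
  have := lg_le_length g (l1 ++ l2) (by
    intro a ha; rcases List.mem_append.mp ha with h | h
    · exact h1 a h
    · exact h2 a h)
  simpa [hs1, hs2, hl1, hl2] using this

lemma lg_neg (g n : ℤ) : lg g (-n) = lg g n := by
  have key : ∀ m : ℤ, lg g (-m) ≤ lg g m := by
    intro m
    obtain ⟨l, hl, hs, hlen⟩ := exists_min_list g m
    have := lg_le_length g (l.map (fun a => -a)) (by
      intro a ha
      obtain ⟨b, hb, rfl⟩ := List.mem_map.mp ha
      exact neg_mem_Ag (hl b hb))
    rw [sum_map_neg', List.length_map, hs, hlen] at this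
    exact this
  have h1 := key n
  have h2 := key (-n)
  simp only [neg_neg] at h2
  omega

lemma lg_Ag_le_one {g a : ℤ} (h : a ∈ Ag g) : lg g a ≤ 1 := by
  have := lg_le_length g [a] (by simpa using h)
  simpa using this

lemma lg_int_le_natAbs (g n : ℤ) : lg g n ≤ n.natAbs := by
  obtain ⟨l, hl, hs, hlen⟩ := rep_list g n
  have := lg_le_length g l hl
  rwa [hs, hlen] at this

lemma lg_pow_le_one (g : ℤ) (i : ℕ) : lg g (g ^ i) ≤ 1 := lg_Ag_le_one (pow_mem_Ag g i)

lemma lg_gmul_le (g x : ℤ) : lg g (g * x) ≤ lg g x := by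
  obtain ⟨l, hl, hs, hlen⟩ := exists_min_list g x
  have := lg_le_length g (l.map (fun a => g * a)) (by
    intro a ha
    obtain ⟨b, hb, rfl⟩ := List.mem_map.mp ha
    rcases hl b hb with h | ⟨i, h | h⟩
    · simp only [Set.mem_singleton_iff] at h; subst h
      simpa using zero_mem_Ag g
    · subst h; rw [← pow_succ']; exact pow_mem_Ag g (i+1)
    · subst h; rw [mul_neg, ← pow_succ']; exact neg_pow_mem_Ag g (i+1))
  rw [List.length_map] at this
  rw [hlen] at this
  rw [sum_map_mul', hs] at this
  exact this

def val (g : ℤ) : List ℤ → ℤ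
  | [] => 0
  | d :: c => d + g * val g c

def wt : List ℤ → ℕ
  | [] => 0
  | d :: c => d.natAbs + wt c

@[simp] lemma val_nil (g : ℤ) : val g [] = 0 := rfl
@[simp] lemma val_cons (g d : ℤ) (c : List ℤ) : val g (d :: c) = d + g * val g c := rfl
@[simp] lemma wt_nil : wt [] = 0 := rfl
@[simp] lemma wt_cons (d : ℤ) (c : List ℤ) : wt (d :: c) = d.natAbs + wt c := rfl

lemma lg_val_le (g : ℤ) (c : List ℤ) : lg g (val g c) ≤ wt c := by
  induction c with
  | nil => simp [lg_zero]
  | cons d t ih =>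
    calc lg g (val g (d :: t)) ≤ lg g d + lg g (g * val g t) := lg_add_le g d (g * val g t)
    _ ≤ d.natAbs + lg g (val g t) := Nat.add_le_add (lg_int_le_natAbs g d) (lg_gmul_le g _)
    _ ≤ d.natAbs + wt t := Nat.add_le_add_left ih _

def addL : List ℤ → List ℤ → List ℤ
  | [], b => b
  | a, [] => a
  | x :: xs, y :: ys => (x + y) :: addL xs ys

lemma val_addL (g : ℤ) : ∀ a b : List ℤ, val g (addL a b) = val g a + val g b := by
  intro a
  induction a with
  | nil => intro b; simp [addL]
  | cons x xs ih =>
    intro b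
    cases b with
    | nil => simp [addL]
    | cons y ys => simp [addL, ih]; ring

lemma wt_addL : ∀ a b : List ℤ, wt (addL a b) ≤ wt a + wt b := by
  intro a
  induction a with
  | nil => intro b; simp [addL]
  | cons x xs ih =>
    intro b
    cases b with
    | nil => simp [addL]
    | cons y ys =>
      simp only [addL, wt_cons]
      have := ih ys
      have h2 := Int.natAbs_add_le x y
      omega

lemma val_single (g e : ℤ) (i : ℕ) : val g (List.replicate i 0 ++ [e]) = e * g ^ i := by
  induction i with
  | zero => simp
  | succ i ih =>
    rw [List.replicate_succ, List.cons_append, val_cons, ih]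
    ring

lemma wt_single (e : ℤ) (i : ℕ) : wt (List.replicate i 0 ++ [e]) = e.natAbs := by
  induction i with
  | zero => simp
  | succ i ih => rw [List.replicate_succ, List.cons_append, wt_cons, ih]; simp

lemma exists_digits_of_list (g : ℤ) (l : List ℤ) (hl : ∀ a ∈ l, a ∈ Ag g) :
    ∃ c, val g c = l.sum ∧ wt c ≤ l.length := by
  induction l with
  | nil => exact ⟨[], rfl, le_refl 0⟩
  | cons a t ih =>
    obtain ⟨c, hc1, hc2⟩ := ih (fun b hb => hl b (List.mem_cons_of_mem a hb))
    have ha := hl a List.mem_cons_self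
    rcases ha with h | ⟨i, h | h⟩
    · simp only [Set.mem_singleton_iff] at h; subst h
      exact ⟨c, by simp [hc1], by simpa using Nat.le_succ_of_le hc2⟩
    · subst h
      refine ⟨addL (List.replicate i 0 ++ [1]) c, ?_, ?_⟩
      · rw [val_addL, val_single, hc1]; simp
      · have := wt_addL (List.replicate i 0 ++ [1]) c
        rw [wt_single] at this
        simpa using le_trans this (by omega)
    · subst h
      refine ⟨addL (List.replicate i 0 ++ [-1]) c, ?_, ?_⟩
      · rw [val_addL, val_single, hc1]; simp
      · have := wt_addL (List.replicate i 0 ++ [-1]) c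
        rw [wt_single] at this
        simpa using le_trans this (by omega)

lemma exists_digits (g n : ℤ) : ∃ c, val g c = n ∧ wt c ≤ lg g n := by
  obtain ⟨l, hl, hs, hlen⟩ := exists_min_list g n
  obtain ⟨c, h1, h2⟩ := exists_digits_of_list g l hl
  exact ⟨c, by rw [h1, hs], by rwa [hlen] at h2⟩

lemma exists_qr {g : ℤ} (hg : 2 ≤ g) (d : ℤ) :
    ∃ q r : ℤ, d = g * q + r ∧ (r.natAbs : ℤ) < g ∧ r.natAbs + q.natAbs ≤ d.natAbs ∧
      (q ≠ 0 → q.natAbs < d.natAbs) := by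
  have key : ∀ d : ℤ, 0 ≤ d → ∃ q r : ℤ, d = g * q + r ∧ 0 ≤ q ∧ 0 ≤ r ∧ r < g ∧
      q + r ≤ d ∧ (q ≠ 0 → q < d) := by
    intro d hd
    refine ⟨d / g, d % g, ?_, ?_, ?_, ?_, ?_, ?_⟩
    · rw [Int.mul_ediv_add_emod d g]
    · exact Int.ediv_nonneg hd (by omega)
    · exact Int.emod_nonneg d (by omega)
    · exact Int.emod_lt_of_pos d (by omega)
    · have h1 : g * (d / g) + d % g = d := Int.mul_ediv_add_emod d g
      have h2 : 0 ≤ d / g := Int.ediv_nonneg hd (by omega)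
      nlinarith
    · intro hq
      have h1 : g * (d / g) + d % g = d := Int.mul_ediv_add_emod d g
      have h2 : 0 ≤ d / g := Int.ediv_nonneg hd (by omega)
      have h3 : 0 ≤ d % g := Int.emod_nonneg d (by omega)
      have h4 : 1 ≤ d / g := lt_of_le_of_ne h2 (Ne.symm hq)
      nlinarith
  rcases le_or_gt 0 d with hd | hd
  · obtain ⟨q, r, h1, h2, h3, h4, h5, h6⟩ := key d hd
    refine ⟨q, r, h1, by omega, by omega, fun hq => by
      have := h6 hq; omega⟩
  · obtain ⟨q, r, h1, h2, h3, h4, h5, h6⟩ := key (-d) (by omega)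
    refine ⟨-q, -r, by linear_combination -h1, by omega, by omega, fun hq => by
      have := h6 (by omega); omega⟩

def addHead (q : ℤ) : List ℤ → List ℤ
  | [] => if q = 0 then [] else [q]
  | x :: xs => (x + q) :: xs

lemma val_addHead (g q : ℤ) (t : List ℤ) : val g (addHead q t) = q + val g t := by
  cases t with
  | nil =>
    by_cases hq : q = 0 <;> simp [addHead, hq]
  | cons x xs => simp [addHead]; ring

lemma wt_addHead (q : ℤ) (t : List ℤ) : wt (addHead q t) ≤ q.natAbs + wt t := by
  cases t with
  | nil => by_cases hq : q = 0 <;> simp [addHead, hq]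
  | cons x xs =>
    simp only [addHead, wt_cons]
    have := Int.natAbs_add_le x q
    omega

lemma exists_norm {g : ℤ} (hg : 2 ≤ g) :
    ∀ M : ℕ, ∀ c : List ℤ, wt c + c.length ≤ M →
      ∃ c', val g c' = val g c ∧ wt c' ≤ wt c ∧ ∀ d ∈ c', (d.natAbs : ℤ) < g := by
  intro M
  induction M with
  | zero =>
    intro c hc
    have : c = [] := by
      cases c with
      | nil => rfl
      | cons d t => simp at hc
    subst this
    exact ⟨[], rfl, le_refl _, by simp⟩
  | succ M ih =>
    intro c hc
    cases c with
    | nil => exact ⟨[], rfl, le_refl _, by simp⟩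
    | cons d t =>
      obtain ⟨q, r, hqr, hr, hsum, hlt⟩ := exists_qr hg d
      have hmeas : wt (addHead q t) + (addHead q t).length ≤ M := by
        cases t with
        | nil =>
          by_cases hq : q = 0
          · subst hq
            simp [addHead]
          · have hd0 : d ≠ 0 := by
              rintro rfl
              simp only [Int.natAbs_zero, Nat.le_zero, Nat.add_eq_zero] at hsum
              exact hq (Int.natAbs_eq_zero.mp hsum.2)
            have := hlt hq
            simp only [addHead, if_neg hq, wt_cons, wt_nil, List.length_cons, List.length_nil] at hc ⊢
            omega
        | cons x xs =>
          simp only [addHead, wt_cons, List.length_cons] at hc ⊢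
          have := Int.natAbs_add_le x q
          omega
      obtain ⟨c'', hv, hw, hd⟩ := ih (addHead q t) hmeas
      refine ⟨r :: c'', ?_, ?_, ?_⟩
      · simp only [val_cons, hv, val_addHead, hqr]; ring
      · have h2 := wt_addHead q t
        simp only [wt_cons]
        omega
      · intro e he
        rcases List.mem_cons.mp he with h | h
        · subst h; exact hr
        · exact hd e h

lemma exists_norm_digits {g : ℤ} (hg : 2 ≤ g) (n : ℤ) :
    ∃ c, val g c = n ∧ wt c ≤ lg g n ∧ ∀ d ∈ c, (d.natAbs : ℤ) < g := by
  obtain ⟨c, h1, h2⟩ := exists_digits g n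
  obtain ⟨c', hv, hw, hd⟩ := exists_norm hg (wt c + c.length) c (le_refl _)
  exact ⟨c', by rw [hv, h1], le_trans hw h2, hd⟩

lemma val_take_drop (g : ℤ) (k : ℕ) : ∀ c : List ℤ,
    val g c = val g (c.take k) + g ^ k * val g (c.drop k) := by
  induction k with
  | zero => intro c; simp
  | succ k ih =>
    intro c
    cases c with
    | nil => simp
    | cons d t =>
      simp only [List.take_succ_cons, List.drop_succ_cons, val_cons, ih t]
      ring

lemma wt_append (a b : List ℤ) : wt (a ++ b) = wt a + wt b := by
  induction a with
  | nil => simp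
  | cons x xs ih => simp [ih]; omega

lemma wt_take_drop (k : ℕ) (c : List ℤ) : wt (c.take k) + wt (c.drop k) = wt c := by
  rw [← wt_append, List.take_append_drop]

lemma val_bound {g : ℤ} (hg : 2 ≤ g) : ∀ c : List ℤ, (∀ d ∈ c, (d.natAbs : ℤ) < g) →
    |val g c| ≤ g ^ c.length - 1 := by
  intro c
  induction c with
  | nil => simp
  | cons d t ih =>
    intro hd
    have h1 : |val g t| ≤ g ^ t.length - 1 := ih (fun e he => hd e (List.mem_cons_of_mem d he))
    have h2 : |d| ≤ g - 1 := by
      have := hd d List.mem_cons_self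
      rw [Int.abs_eq_natAbs]; omega
    have h3 : |d + g * val g t| ≤ |d| + |g * val g t| := abs_add_le _ _
    rw [abs_mul] at h3
    have hga : |g| = g := abs_of_nonneg (by omega)
    rw [hga] at h3
    simp only [val_cons, List.length_cons]
    have h4 : g * |val g t| ≤ g * (g ^ t.length - 1) :=
      mul_le_mul_of_nonneg_left h1 (by omega)
    calc |d + g * val g t| ≤ |d| + g * |val g t| := h3
    _ ≤ (g - 1) + g * (g ^ t.length - 1) := by omega
    _ = g ^ (t.length + 1) - 1 := by rw [pow_succ]; ring

lemma val_take_bound {g : ℤ} (hg : 2 ≤ g) (k : ℕ) (c : List ℤ)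
    (hd : ∀ d ∈ c, (d.natAbs : ℤ) < g) : |val g (c.take k)| ≤ g ^ k - 1 := by
  have h1 := val_bound hg (c.take k) (fun e he => hd e (List.mem_of_mem_take he))
  have h2 : g ^ (c.take k).length ≤ g ^ k :=
    pow_le_pow_right₀ (by omega) (by simpa using List.length_take_le k c)
  omega

lemma val_of_wt_eq_zero (g : ℤ) : ∀ c : List ℤ, wt c = 0 → val g c = 0 := by
  intro c
  induction c with
  | nil => simp
  | cons d t ih =>
    intro h
    simp only [wt_cons, Nat.add_eq_zero] at h
    have hd : d = 0 := Int.natAbs_eq_zero.mp h.1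
    simp [hd, ih h.2]

lemma val_of_wt_le_one (g : ℤ) : ∀ c : List ℤ, wt c ≤ 1 →
    ∃ (j : ℕ) (e : ℤ), e.natAbs ≤ 1 ∧ val g c = e * g ^ j := by
  intro c
  induction c with
  | nil => exact fun _ => ⟨0, 0, by simp, by simp⟩
  | cons d t ih =>
    intro h
    simp only [wt_cons] at h
    rcases Nat.eq_zero_or_pos d.natAbs with hd | hd
    · have hd0 : d = 0 := Int.natAbs_eq_zero.mp hd
      obtain ⟨j, e, he, hv⟩ := ih (by omega)
      exact ⟨j + 1, e, he, by simp [hd0, hv, pow_succ]; ring⟩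
    · have hw : wt t = 0 := by omega
      refine ⟨0, d, by omega, ?_⟩
      simp [val_of_wt_eq_zero g t hw]

lemma not_g_add_one {g : ℤ} (hg : 2 ≤ g) (j : ℕ) (e : ℤ) (he : e.natAbs ≤ 1) :
    e * g ^ j ≠ g + 1 := by
  have he3 : e = -1 ∨ e = 0 ∨ e = 1 := by omega
  have hp : 0 < g ^ j := pow_pos (by omega) j
  rcases he3 with rfl | rfl | rfl
  · intro h; nlinarith
  · intro h; rw [zero_mul] at h; omega
  · intro h
    simp only [one_mul] at h
    match j with
    | 0 => rw [pow_zero] at h; omega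
    | 1 => rw [pow_one] at h; omega
    | (k+2) =>
      have h2 : g ^ 2 ≤ g ^ (k + 2) := pow_le_pow_right₀ (by omega) (by omega)
      nlinarith

lemma lemD {g : ℤ} (hg : 2 ≤ g) :
    ∀ s K : ℕ, ∀ n : ℤ, 0 ≤ n → n * g ^ (s + 1) < g ^ K →
      lg g (g ^ K - n) ≤ s → lg g n < s := by
  intro s
  induction s with
  | zero =>
    intro K n hn h2 h3
    exfalso
    have h0 : lg g (g ^ K - n) = 0 := Nat.le_zero.mp h3
    have h4 := (lg_eq_zero_iff g _).mp h0
    have hn' : n = g ^ K := by omega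
    subst hn'
    rw [pow_one] at h2
    have hp : 0 < g ^ K := pow_pos (by omega) K
    nlinarith
  | succ s ih =>
    intro K n hn h2 h3
    rcases eq_or_lt_of_le hn with heq | hpos
    · rw [← heq, lg_zero]; omega
    have hgp : (0:ℤ) < g := by omega
    have hg1 : (1:ℤ) < g := by omega
    have hK : s + 2 < K := by
      have hx : g ^ (s + 2) ≤ n * g ^ (s + 2) :=
        le_mul_of_one_le_left (pow_pos hgp _).le (by omega)
      exact (pow_lt_pow_iff_right₀ hg1).mp (lt_of_le_of_lt hx h2)
    obtain ⟨K1, rfl⟩ : ∃ K1, K = K1 + 1 := ⟨K - 1, by omega⟩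
    have hnK1 : n < g ^ K1 := by
      have h5 : n * g ≤ n * g ^ (s + 2) := by
        apply mul_le_mul_of_nonneg_left _ hn
        calc g = g ^ 1 := (pow_one g).symm
        _ ≤ g ^ (s + 2) := pow_le_pow_right₀ (by omega) (by omega)
      have h6 : n * g < g ^ K1 * g := by
        rw [← pow_succ]; exact lt_of_le_of_lt h5 h2
      exact lt_of_mul_lt_mul_right h6 (by omega)
    set y := g ^ (K1 + 1) - n with hy
    obtain ⟨c, hval, hwt, hdig⟩ := exists_norm_digits hg y
    have hwt' : wt c ≤ s + 1 := le_trans hwt h3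
    set L := val g (c.take K1) with hL
    set D := val g (c.drop K1) with hD
    have hsplit : y = L + g ^ K1 * D := by rw [← hval]; exact val_take_drop g K1 c
    have hLb := abs_le.mp (val_take_bound hg K1 c hdig)
    rw [← hL] at hLb
    obtain ⟨hLb1, hLb2⟩ := hLb
    have hp1 : (0:ℤ) < g ^ K1 := pow_pos hgp _
    have hKs : g ^ (K1 + 1) = g ^ K1 * g := pow_succ g K1
    have hsplit' : g ^ K1 * D = g ^ K1 * g - n - L := by
      rw [← hKs]; linarith [hsplit]
    have hex1 : g ^ K1 * (g - 2) = g ^ K1 * g - 2 * g ^ K1 := by ring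
    have hex2 : g ^ K1 * (g + 1) = g ^ K1 * g + g ^ K1 := by ring
    have hDlow : g - 2 < D := by
      have hm : g ^ K1 * (g - 2) < g ^ K1 * D := by linarith
      exact lt_of_mul_lt_mul_left hm hp1.le
    have hDhigh : D < g + 1 := by
      have hm : g ^ K1 * D < g ^ K1 * (g + 1) := by linarith
      exact lt_of_mul_lt_mul_left hm hp1.le
    have hDcase : D = g - 1 ∨ D = g := by omega
    have hwtd : 1 ≤ wt (c.drop K1) := by
      rcases Nat.eq_zero_or_pos (wt (c.drop K1)) with h0 | h1
      · exfalso
        have hv0 := val_of_wt_eq_zero g (c.drop K1) h0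
        rw [← hD] at hv0
        rcases hDcase with hh | hh <;> omega
      · exact h1
    have hwts : wt (c.take K1) + wt (c.drop K1) = wt c := wt_take_drop K1 c
    rcases hDcase with hDv | hDv
    · have hLval : L = g ^ K1 - n := by
        rw [hDv] at hsplit'; linarith
      have hlgL : lg g (g ^ K1 - n) ≤ s := by
        have h7 := lg_val_le g (c.take K1)
        rw [← hL, hLval] at h7
        omega
      have h8 : n * g ^ (s + 1) < g ^ K1 := by
        have h9 : n * g ^ (s + 1) * g < g ^ K1 * g := by
          rw [mul_assoc, ← pow_succ, ← pow_succ]; exact h2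
        exact lt_of_mul_lt_mul_right h9 (by omega)
      have := ih K1 n hn h8 hlgL
      omega
    · have hLval : L = -n := by
        rw [hDv] at hsplit'; linarith
      have h7 := lg_val_le g (c.take K1)
      rw [← hL, hLval, lg_neg] at h7
      omega

lemma inc_pos {g : ℤ} (hg : 2 ≤ g) (n : ℤ) (hn : 0 ≤ n) (N : ℕ)
    (hN : (n + 1) * g ^ (lg g n + 2) ≤ g ^ N) :
    lg g (n + g ^ N) = lg g n + 1 := by
  set m := lg g n with hm
  have hgp : (0:ℤ) < g := by omega
  have hg1 : (1:ℤ) < g := by omega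
  have hub : lg g (n + g ^ N) ≤ m + 1 := by
    have h0 := lg_add_le g n (g ^ N)
    have h1 : lg g (g ^ N) ≤ 1 := lg_pow_le_one g N
    omega
  have hpow2 : g ^ 2 ≤ g ^ N := by
    calc g ^ 2 = 1 * g ^ 2 := (one_mul _).symm
    _ ≤ (n + 1) * g ^ (m + 2) :=
        mul_le_mul (by omega) (pow_le_pow_right₀ (by omega) (by omega)) (pow_pos hgp 2).le (by omega)
    _ ≤ g ^ N := hN
  have hN2 : 2 ≤ N := (pow_le_pow_iff_right₀ hg1).mp hpow2
  obtain ⟨N1, rfl⟩ : ∃ N1, N = N1 + 1 := ⟨N - 1, by omega⟩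
  have hKs : g ^ (N1 + 1) = g ^ N1 * g := pow_succ g N1
  have hglepow : g ≤ g ^ (m + 2) := by
    calc g = g ^ 1 := (pow_one g).symm
    _ ≤ g ^ (m + 2) := pow_le_pow_right₀ (by omega) (by omega)
  have hnN1 : n + 1 ≤ g ^ N1 := by
    have h5 : (n + 1) * g ≤ (n + 1) * g ^ (m + 2) :=
      mul_le_mul_of_nonneg_left hglepow (by omega)
    have h6 : (n + 1) * g ≤ g ^ N1 * g := by
      rw [← hKs]; exact le_trans h5 hN
    exact le_of_mul_le_mul_right h6 (by omega)
  have hmul1 : (n + 1) * g ^ (m + 1) ≤ g ^ N1 := by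
    have h5 : (n + 1) * g ^ (m + 1) * g ≤ g ^ N1 * g := by
      rw [mul_assoc, ← pow_succ, ← hKs]; exact hN
    exact le_of_mul_le_mul_right h5 (by omega)
  by_contra hne
  have hlow : lg g (n + g ^ (N1 + 1)) ≤ m := by omega
  set y := n + g ^ (N1 + 1) with hy
  obtain ⟨c, hval, hwt, hdig⟩ := exists_norm_digits hg y
  have hwt' : wt c ≤ m := le_trans hwt hlow
  set L := val g (c.take N1) with hL
  set D := val g (c.drop N1) with hD
  have hsplit : y = L + g ^ N1 * D := by rw [← hval]; exact val_take_drop g N1 c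
  have hLb := abs_le.mp (val_take_bound hg N1 c hdig)
  rw [← hL] at hLb
  obtain ⟨hLb1, hLb2⟩ := hLb
  have hp1 : (0:ℤ) < g ^ N1 := pow_pos hgp _
  have hsplit' : g ^ N1 * D = n + g ^ N1 * g - L := by
    rw [← hKs]; linarith [hsplit]
  have hex1 : g ^ N1 * (g - 1) = g ^ N1 * g - g ^ N1 := by ring
  have hex2 : g ^ N1 * (g + 2) = g ^ N1 * g + 2 * g ^ N1 := by ring
  have hDlow : g - 1 < D := by
    have hmm : g ^ N1 * (g - 1) < g ^ N1 * D := by linarith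
    exact lt_of_mul_lt_mul_left hmm hp1.le
  have hDhigh : D < g + 2 := by
    have hmm : g ^ N1 * D < g ^ N1 * (g + 2) := by linarith
    exact lt_of_mul_lt_mul_left hmm hp1.le
  have hwts : wt (c.take N1) + wt (c.drop N1) = wt c := wt_take_drop N1 c
  have hDcase : D = g ∨ D = g + 1 := by omega
  rcases hDcase with hDv | hDv
  · -- D = g : L = n
    have hLval : L = n := by rw [hDv] at hsplit'; linarith
    have hwtd : 1 ≤ wt (c.drop N1) := by
      rcases Nat.eq_zero_or_pos (wt (c.drop N1)) with h0 | h1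
      · exfalso
        have hv0 := val_of_wt_eq_zero g (c.drop N1) h0
        rw [← hD] at hv0
        omega
      · exact h1
    have h7 := lg_val_le g (c.take N1)
    rw [← hL, hLval] at h7
    omega
  · -- D = g + 1 : L = n - g^N1
    have hLval : L = n - g ^ N1 := by rw [hDv] at hsplit'; linarith
    have hwtd : 2 ≤ wt (c.drop N1) := by
      by_contra hc
      push_neg at hc
      obtain ⟨j, e, he, hv⟩ := val_of_wt_le_one g (c.drop N1) (by omega)
      rw [← hD, hDv] at hv
      exact not_g_add_one hg j e he hv.symm
    have hm2 : 2 ≤ m := by omega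
    obtain ⟨s, hs⟩ : ∃ s, m = s + 2 := ⟨m - 2, by omega⟩
    have h7 := lg_val_le g (c.take N1)
    rw [← hL] at h7
    have h8 : lg g (g ^ N1 - n) ≤ s := by
      have : g ^ N1 - n = -L := by rw [hLval]; ring
      rw [this, lg_neg]
      omega
    have h9 : n * g ^ (s + 1) < g ^ N1 := by
      have h10 : n * g ^ (s + 1) < (n + 1) * g ^ (m + 1) := by
        have : s + 1 = m - 1 := by omega
        have hle : g ^ (s + 1) ≤ g ^ (m + 1) := pow_le_pow_right₀ (by omega) (by omega)
        have := mul_le_mul_of_nonneg_left hle hn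
        nlinarith [pow_pos hgp (m + 1)]
      exact lt_of_lt_of_le h10 hmul1
    have := lemD hg s N1 n hn h9 h8
    omega

lemma inc {g : ℤ} (hg : 2 ≤ g) (n : ℤ) :
    ∃ a, a ∈ Ag g ∧ lg g (n + a) = lg g n + 1 := by
  have hone : (1:ℤ) < g := by omega
  obtain ⟨N, hN⟩ := (pow_unbounded_of_one_lt ((|n| + 1) * g ^ (lg g n + 2)) hone)
  have hN' : (|n| + 1) * g ^ (lg g n + 2) ≤ g ^ N := hN.le
  rcases le_or_gt 0 n with hn | hn
  · refine ⟨g ^ N, pow_mem_Ag g N, ?_⟩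
    apply inc_pos hg n hn N
    have habs : |n| = n := abs_of_nonneg hn
    rwa [habs] at hN'
  · refine ⟨-g ^ N, neg_pow_mem_Ag g N, ?_⟩
    have h1 : lg g (-n + g ^ N) = lg g (-n) + 1 := by
      apply inc_pos hg (-n) (by omega) N
      rw [lg_neg]
      have habs : |n| = -n := abs_of_neg hn
      rwa [habs] at hN'
    have h2 : n + -g ^ N = -(-n + g ^ N) := by ring
    rw [h2, lg_neg, h1, lg_neg]

lemma dec (g : ℤ) (n : ℤ) (k : ℕ) (hk : lg g n = k + 1) :
    ∃ a, a ∈ Ag g ∧ lg g (n - a) = k := by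
  obtain ⟨l, hl, hs, hlen⟩ := exists_min_list g n
  rw [hk] at hlen
  cases l with
  | nil => simp at hlen
  | cons a t =>
    have ha := hl a List.mem_cons_self
    refine ⟨a, ha, ?_⟩
    have hts : t.sum = n - a := by
      simp only [List.sum_cons] at hs
      omega
    have h1 : lg g (n - a) ≤ k := by
      have h0 := lg_le_length g t (fun b hb => hl b (List.mem_cons_of_mem a hb))
      rw [hts] at h0
      simp only [List.length_cons] at hlen
      omega
    have h2 : lg g n ≤ lg g (n - a) + 1 := by
      have h3 := lg_add_le g (n - a) a
      rw [sub_add_cancel] at h3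
      have h4 : lg g a ≤ 1 := lg_Ag_le_one ha
      omega
    omega

lemma dec_iter (g : ℤ) : ∀ j : ℕ, ∀ n : ℤ, j ≤ lg g n →
    ∃ l : List ℤ, (∀ a ∈ l, a ∈ Ag g) ∧ l.length = j ∧ lg g (n - l.sum) + j = lg g n := by
  intro j
  induction j with
  | zero => intro n _; exact ⟨[], by simp, by simp, by simp⟩
  | succ j ih =>
    intro n hj
    obtain ⟨k, hk⟩ : ∃ k, lg g n = k + 1 := ⟨lg g n - 1, by omega⟩
    obtain ⟨a, ha, hdec⟩ := dec g n k hk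
    obtain ⟨l, hl, hlen, hval⟩ := ih (n - a) (by omega)
    refine ⟨a :: l, ?_, by simp [hlen], ?_⟩
    · intro b hb
      rcases List.mem_cons.mp hb with rfl | hb
      · exact ha
      · exact hl b hb
    · have : n - (a :: l).sum = n - a - l.sum := by
        simp only [List.sum_cons]; ring
      rw [this]
      omega

lemma inc_iter {g : ℤ} (hg : 2 ≤ g) : ∀ k : ℕ, ∀ n : ℤ,
    ∃ l : List ℤ, (∀ a ∈ l, a ∈ Ag g) ∧ l.length = k ∧ lg g (n + l.sum) = lg g n + k := by
  intro k
  induction k with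
  | zero => intro n; exact ⟨[], by simp, by simp, by simp⟩
  | succ k ih =>
    intro n
    obtain ⟨a, ha, hinc⟩ := inc hg n
    obtain ⟨l, hl, hlen, hval⟩ := ih (n + a)
    refine ⟨a :: l, ?_, by simp [hlen], ?_⟩
    · intro b hb
      rcases List.mem_cons.mp hb with rfl | hb
      · exact ha
      · exact hl b hb
    · have : n + (a :: l).sum = (n + a) + l.sum := by
        simp only [List.sum_cons]; ring
      rw [this]
      omega

end StmtAux

theorem stmt14 (g : ℤ) (hg : 2 ≤ g) (hge : Even g) (h : ℕ) :
    foldSum h (Ag g) + (⋃ q : ℕ, {n : ℤ | lg g n = (2 * h + 1) * q}) = Set.univ := by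
  ext x
  simp only [Set.mem_univ, iff_true]
  set M := 2 * h + 1 with hM
  set m := lg g x with hm
  have hMpos : 0 < M := by omega
  have hmod : m % M < M := Nat.mod_lt _ hMpos
  have hdm : M * (m / M) + m % M = m := Nat.div_add_mod m M
  rcases le_or_gt (m % M) h with hr | hr
  · -- subtract m % M elements
    obtain ⟨l, hl, hlen, hval⟩ := StmtAux.dec_iter g (m % M) x (Nat.mod_le m M)
    refine Set.mem_add.mpr ⟨l.sum, ?_, x - l.sum, ?_, by ring⟩
    · refine ⟨l ++ List.replicate (h - m % M) 0, ?_, ?_, by simp⟩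
      · intro a ha
        rcases List.mem_append.mp ha with ha | ha
        · exact hl a ha
        · rw [List.eq_of_mem_replicate ha]; exact StmtAux.zero_mem_Ag g
      · simp [hlen]; omega
    · rw [Set.mem_iUnion]
      refine ⟨m / M, ?_⟩
      show lg g (x - l.sum) = M * (m / M)
      generalize M * (m / M) = P at hdm ⊢
      omega
  · -- add M - m % M elements
    obtain ⟨l, hl, hlen, hval⟩ := StmtAux.inc_iter hg (M - m % M) x
    refine Set.mem_add.mpr ⟨(l.map (fun a => -a)).sum, ?_, x + l.sum, ?_, ?_⟩
    · refine ⟨l.map (fun a => -a) ++ List.replicate (h - (M - m % M)) 0, ?_, ?_, by simp⟩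
      · intro a ha
        rcases List.mem_append.mp ha with ha | ha
        · obtain ⟨b, hb, rfl⟩ := List.mem_map.mp ha
          exact StmtAux.neg_mem_Ag (hl b hb)
        · rw [List.eq_of_mem_replicate ha]; exact StmtAux.zero_mem_Ag g
      · simp [hlen]; omega
    · rw [Set.mem_iUnion]
      refine ⟨m / M + 1, ?_⟩
      show lg g (x + l.sum) = M * (m / M + 1)
      rw [Nat.mul_add, Nat.mul_one]
      generalize M * (m / M) = P at hdm ⊢
      omega
    · rw [StmtAux.sum_map_neg']
      ring
end
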